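/- arXiv:0710.1797 — 6 statements merged into one kernel-verified Lean document; each statement's English description precedes it below -/
import Mathlib

section
/- Let n, t be positive integers with t ≤ n. Suppose ℬ is a family of t-element subsets of {1,...,n} and G is a subgroup of the group (𝒫({1,...,n}), Δ) (power set under symmetric difference) of order 2^t such that every nonempty element of G intersects every member of ℬ. If 𝒜 ⊆ 𝒫({1,...,n}) is a family such that for all A, A' ∈ 𝒜 there exists B ∈ ℬ with B ∩ (A Δ A') = ∅, then |𝒜| ≤ 2^{n-t}. -/
open Finset
open scoped symmDiff Classical

/-- The cyclic block of length `t` modulo `n` starting at `a`, i.e. `{a+1,...,a+t}`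
reduced modulo `n` into `{1,...,n}`. -/
def cyclicBlock (n t a : ℕ) : Finset ℕ :=
  (Finset.range t).image (fun j => (a + j) % n + 1)

instance : Std.Commutative (α := Finset ℕ) (· ∆ ·) := ⟨symmDiff_comm⟩
instance : Std.Associative (α := Finset ℕ) (· ∆ ·) := ⟨symmDiff_assoc⟩

/-- Iterated symmetric difference `∆_{i ∈ I} g i`. -/
def symmDiffs (I : Finset ℕ) (g : ℕ → Finset ℕ) : Finset ℕ :=
  I.fold (· ∆ ·) ∅ g

theorem stmt1 (n t : ℕ) (ht : 0 < t) (htn : t ≤ n)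
    (ℬ : Finset (Finset ℕ)) (hB : ∀ B ∈ ℬ, B ⊆ Finset.Icc 1 n ∧ B.card = t)
    (G : Finset (Finset ℕ)) (hGsub : G ⊆ (Finset.Icc 1 n).powerset)
    (hGzero : ∅ ∈ G) (hGclosed : ∀ g ∈ G, ∀ h ∈ G, g ∆ h ∈ G)
    (hGcard : G.card = 2 ^ t)
    (hGmeet : ∀ g ∈ G, g ≠ ∅ → ∀ B ∈ ℬ, (g ∩ B).Nonempty)
    (𝒜 : Finset (Finset ℕ)) (hA : 𝒜 ⊆ (Finset.Icc 1 n).powerset)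
    (hagree : ∀ A ∈ 𝒜, ∀ A' ∈ 𝒜, ∃ B ∈ ℬ, B ∩ (A ∆ A') = ∅) :
    𝒜.card ≤ 2 ^ (n - t) := by

  classical
  -- Key: if A ∆ A' ∈ G for A, A' ∈ 𝒜, then A = A'.
  have key : ∀ A ∈ 𝒜, ∀ A' ∈ 𝒜, A ∆ A' ∈ G → A = A' := by
    intro A hA1 A' hA2 hmem
    by_contra hne
    have hne' : A ∆ A' ≠ ∅ := by
      intro h
      exact hne (symmDiff_eq_bot.mp h)
    obtain ⟨B, hBmem, hBint⟩ := hagree A hA1 A' hA2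
    have hnonemp := hGmeet _ hmem hne' B hBmem
    rw [Finset.inter_comm] at hBint
    rw [hBint] at hnonemp
    exact Finset.not_nonempty_empty hnonemp
  set f : Finset ℕ → Finset (Finset ℕ) := fun A => G.image (A ∆ ·) with hf
  -- each coset has cardinality 2^t
  have hcard : ∀ A : Finset ℕ, (f A).card = 2 ^ t := by
    intro A
    rw [hf]
    rw [Finset.card_image_of_injective _ ?_, hGcard]
    intro g h hgh
    ext x
    have hx := Finset.ext_iff.mp hgh x
    simp only [Finset.mem_symmDiff] at hx
    tauto
  -- pairwise disjoint
  have hdisj : (𝒜 : Set (Finset ℕ)).PairwiseDisjoint f := by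
    intro A hA1 A' hA2 hne
    simp only [Function.onFun]
    rw [Finset.disjoint_left]
    intro X hX1 hX2
    rw [hf] at hX1 hX2
    simp only [Finset.mem_image] at hX1 hX2
    obtain ⟨g, hg, hXg⟩ := hX1
    obtain ⟨h, hh, hXh⟩ := hX2
    have heq : A ∆ g = A' ∆ h := hXg.trans hXh.symm
    have hAA : A ∆ A' = g ∆ h := by
      ext x
      have hx := Finset.ext_iff.mp heq x
      simp only [Finset.mem_symmDiff] at hx ⊢
      tauto
    have : A ∆ A' ∈ G := hAA ▸ hGclosed g hg h hh
    exact hne (key A hA1 A' hA2 this)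
  -- biUnion of cosets is inside the powerset
  have hsub : 𝒜.biUnion f ⊆ (Finset.Icc 1 n).powerset := by
    intro X hX
    simp only [Finset.mem_biUnion] at hX
    obtain ⟨A, hA1, hX⟩ := hX
    rw [hf] at hX
    simp only [Finset.mem_image] at hX
    obtain ⟨g, hg, rfl⟩ := hX
    rw [Finset.mem_powerset]
    have h1 : A ⊆ Finset.Icc 1 n := Finset.mem_powerset.mp (hA hA1)
    have h2 : g ⊆ Finset.Icc 1 n := Finset.mem_powerset.mp (hGsub hg)
    intro x hx
    rw [Finset.mem_symmDiff] at hx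
    rcases hx with ⟨hx, -⟩ | ⟨hx, -⟩
    · exact h1 hx
    · exact h2 hx
  have hcount : (𝒜.biUnion f).card = 𝒜.card * 2 ^ t := by
    rw [Finset.card_biUnion (fun A hA1 A' hA2 hne => hdisj hA1 hA2 hne)]
    rw [Finset.sum_congr rfl (fun A _ => hcard A), Finset.sum_const, smul_eq_mul]
  have hle : 𝒜.card * 2 ^ t ≤ 2 ^ (n - t) * 2 ^ t := by
    rw [← hcount, ← pow_add, Nat.sub_add_cancel htn]
    calc (𝒜.biUnion f).card ≤ (Finset.Icc 1 n).powerset.card := Finset.card_le_card hsub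
    _ = 2 ^ n := by rw [Finset.card_powerset, Nat.card_Icc]; norm_num
  exact Nat.le_of_mul_le_mul_right hle (pow_pos (by norm_num) t)
end

section
/- Let n = qt + 1 with q, t positive integers. For i ∈ {1,...,t}, define g_i = {x ∈ {1,...,n} : x ≡ i (mod t)} ∪ {n}. Let G be the subgroup of (𝒫({1,...,n}), Δ) generated by g_1,...,g_t. Then every nonempty element of G intersects every cyclic block of length t modulo n. -/
open Finset
open scoped symmDiff Classical

lemma mem_symmDiffs (I : Finset ℕ) (g : ℕ → Finset ℕ) (x : ℕ) :
    x ∈ symmDiffs I g ↔ Odd ((I.filter (fun i => x ∈ g i)).card) := by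
  induction I using Finset.induction with
  | empty => simp [symmDiffs]
  | insert a I ha ih =>
    simp only [symmDiffs] at ih ⊢
    rw [Finset.fold_insert ha, Finset.mem_symmDiff, Finset.filter_insert, ih]
    by_cases hx : x ∈ g a
    · rw [if_pos hx, Finset.card_insert_of_notMem (fun h => ha (Finset.mem_of_mem_filter a h))]
      simp [hx, Nat.odd_add_one, Nat.not_odd_iff_even, Nat.not_even_iff_odd]
    · rw [if_neg hx]
      simp [hx]

lemma mod_inj_Icc {t i j : ℕ} (hi : i ∈ Finset.Icc 1 t) (hj : j ∈ Finset.Icc 1 t)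
    (h : i % t = j % t) : i = j := by
  simp only [Finset.mem_Icc] at hi hj
  rcases Nat.lt_or_ge i t with h1 | h1
  · rcases Nat.lt_or_ge j t with h2 | h2
    · rwa [Nat.mod_eq_of_lt h1, Nat.mod_eq_of_lt h2] at h
    · have hjt : j = t := le_antisymm hj.2 h2
      rw [Nat.mod_eq_of_lt h1, hjt, Nat.mod_self] at h
      omega
  · have hit : i = t := le_antisymm hi.2 h1
    rcases Nat.lt_or_ge j t with h2 | h2
    · rw [hit, Nat.mod_self, Nat.mod_eq_of_lt h2] at h
      omega
    · have hjt : j = t := le_antisymm hj.2 h2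
      rw [hit, hjt]

lemma mem_S_of_ne {n t : ℕ} {g : ℕ → Finset ℕ}
    (hg : ∀ i, g i = (Finset.Icc 1 n).filter (fun x => x % t = i % t) ∪ {n})
    {I : Finset ℕ} (hI : I ⊆ Finset.Icc 1 t) {i x : ℕ} (hiI : i ∈ I)
    (hx1 : 1 ≤ x) (hxn : x ≤ n) (hxe : x ≠ n) (hres : x % t = i % t) :
    x ∈ symmDiffs I g := by
  rw [mem_symmDiffs]
  have hfil : I.filter (fun j => x ∈ g j) = {i} := by
    ext j
    simp only [Finset.mem_filter, Finset.mem_singleton]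
    constructor
    · rintro ⟨hjI, hxj⟩
      rw [hg j] at hxj
      simp only [Finset.mem_union, Finset.mem_filter, Finset.mem_singleton, Finset.mem_Icc] at hxj
      rcases hxj with ⟨_, hmod⟩ | hxj
      · exact mod_inj_Icc (hI hjI) (hI hiI) (by rw [← hmod, hres])
      · exact absurd hxj hxe
    · rintro rfl
      refine ⟨hiI, ?_⟩
      rw [hg j]
      simp only [Finset.mem_union, Finset.mem_filter, Finset.mem_singleton, Finset.mem_Icc]
      exact Or.inl ⟨⟨hx1, hxn⟩, hres⟩
  rw [hfil]
  simp

lemma n_mem_S {n t : ℕ} (hn1 : 1 ≤ n) {g : ℕ → Finset ℕ}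
    (hg : ∀ i, g i = (Finset.Icc 1 n).filter (fun x => x % t = i % t) ∪ {n})
    {I : Finset ℕ} (hodd : Odd I.card) : n ∈ symmDiffs I g := by
  rw [mem_symmDiffs]
  have : I.filter (fun j => n ∈ g j) = I :=
    Finset.filter_true_of_mem (fun j _ => by rw [hg j]; simp)
  rwa [this]

-- reduce (c + k * t) % t
lemma mod_helper (c k t : ℕ) (hc : c < t) : (c + k * t) % t = c := by
  rw [Nat.add_mul_mod_self_right, Nat.mod_eq_of_lt hc]

/-- Key: for a residue r different from `a % t`, the cyclic block contains an element
with residue r that is not equal to n. -/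
lemma key (n q t a r : ℕ) (hq : 0 < q) (ht : 0 < t) (hn : n = q * t + 1)
    (ha : a < n) (hr : r < t) (hne : r ≠ a % t) :
    ∃ x, x ∈ cyclicBlock n t a ∧ x % t = r ∧ x ≠ n ∧ 1 ≤ x ∧ x ≤ n := by
  have htn : t < n := by nlinarith
  have hqt : q * t = (q - 1) * t + t := by
    nth_rewrite 1 [show q = (q - 1) + 1 from by omega]
    rw [add_mul, one_mul]
  have ht1 : 2 ≤ t := by
    rcases Nat.lt_or_ge t 2 with h | h
    · exfalso
      apply hne
      have h1 : t = 1 := by omega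
      rw [h1, Nat.mod_one]
      omega
    · exact h
  rcases le_or_gt (a + t) n with hcase | hcase
  · -- non wrapping
    set c := (a + 1) % t with hc
    have hclt : c < t := Nat.mod_lt _ ht
    set j := (r + t - c) % t with hj
    have hjlt : j < t := Nat.mod_lt _ ht
    have hax : a + j < n := by omega
    have hxres : (a + j + 1) % t = r := by
      have hd : t * ((a + 1) / t) + c = a + 1 := Nat.div_add_mod (a + 1) t
      have hd2 : ((a+1)/t + 1) * t = t * ((a+1)/t) + t := by ring
      have e1 : a + 1 + (r + t - c) = r + ((a+1)/t + 1) * t := by omega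
      calc (a + j + 1) % t = (a + 1 + (r + t - c) % t) % t := by rw [hj, Nat.add_right_comm]
        _ = (a + 1 + (r + t - c)) % t := Nat.add_mod_mod _ _ _
        _ = r := by rw [e1, mod_helper r _ t hr]
    refine ⟨a + j + 1, ?_, hxres, ?_, by omega, by omega⟩
    · rw [cyclicBlock, Finset.mem_image]
      exact ⟨j, Finset.mem_range.mpr hjlt, by rw [Nat.mod_eq_of_lt hax]⟩
    · -- x ≠ n
      intro hxn
      have hvaln : a + j + 1 = 1 + q * t := by omega
      rw [hvaln, mod_helper 1 q t (by omega)] at hxres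
      have hamod : a % t = 1 := by
        have hvala : a = 1 + (q - 1) * t := by omega
        rw [hvala, mod_helper 1 _ t (by omega)]
      omega
  · -- wrapping
    set m := a + t - n with hm
    have hm1 : 1 ≤ m := by omega
    have hmt : m ≤ t - 1 := by omega
    have hva : a = (m + 1) + (q - 1) * t := by omega
    have hamod : a % t = (m + 1) % t := by
      rw [hva, Nat.add_mul_mod_self_right]
    rcases le_or_gt 1 r with hr1 | hr0
    · rcases le_or_gt r m with hrm | hrm
      · -- x = r, j = t - m + r - 1
        refine ⟨r, ?_, Nat.mod_eq_of_lt hr, by omega, hr1, by omega⟩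
        rw [cyclicBlock, Finset.mem_image]
        refine ⟨t - m + r - 1, Finset.mem_range.mpr (by omega), ?_⟩
        have : a + (t - m + r - 1) = (r - 1) + 1 * n := by omega
        rw [this, Nat.add_mul_mod_self_right, Nat.mod_eq_of_lt (by omega)]
        omega
      · -- r ≥ m + 1, and r ≠ (m+1) % t; since r < t and m + 1 ≤ t, (m+1)%t = m+1 if m+1<t
        have hmlt : m + 1 < t := by
          rcases Nat.lt_or_ge (m+1) t with h | h
          · exact h
          · exfalso
            have : m + 1 = t := by omega
            rw [this, Nat.mod_self] at hamod
            omega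
        have hrm2 : m + 2 ≤ r := by
          rcases Nat.eq_or_lt_of_le hrm with h | h
          · exfalso; apply hne; rw [hamod, Nat.mod_eq_of_lt hmlt]; omega
          · omega
        -- x = a + (r - m - 1)
        refine ⟨a + (r - m - 1), ?_, ?_, by omega, by omega, by omega⟩
        · rw [cyclicBlock, Finset.mem_image]
          refine ⟨r - m - 2, Finset.mem_range.mpr (by omega), ?_⟩
          rw [Nat.mod_eq_of_lt (by omega : a + (r - m - 2) < n)]
          omega
        · rw [hva, show m + 1 + (q-1)*t + (r - m - 1) = r + (q-1)*t by omega,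
            Nat.add_mul_mod_self_right, Nat.mod_eq_of_lt hr]
    · -- r = 0, x = n - 1
      have hr0' : r = 0 := by omega
      have hmlt : m + 1 < t := by
        rcases Nat.lt_or_ge (m+1) t with h | h
        · exact h
        · exfalso
          have : m + 1 = t := by omega
          rw [this, Nat.mod_self] at hamod
          omega
      refine ⟨n - 1, ?_, ?_, by omega, by omega, by omega⟩
      · rw [cyclicBlock, Finset.mem_image]
        refine ⟨t - m - 2, Finset.mem_range.mpr (by omega), ?_⟩
        rw [Nat.mod_eq_of_lt (by omega : a + (t - m - 2) < n)]
        omega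
      · rw [show n - 1 = 0 + q * t by omega, Nat.add_mul_mod_self_right, hr0', Nat.zero_mod]

theorem stmt3 (n q t : ℕ) (hq : 0 < q) (ht : 0 < t) (hn : n = q * t + 1)
    (g : ℕ → Finset ℕ)
    (hg : ∀ i, g i = (Finset.Icc 1 n).filter (fun x => x % t = i % t) ∪ {n}) :
    ∀ I ⊆ Finset.Icc 1 t, symmDiffs I g ≠ ∅ →
      ∀ a < n, (symmDiffs I g ∩ cyclicBlock n t a).Nonempty := by
  intro I hI hS a ha
  have htn : t < n := by nlinarith
  have hIne : I.Nonempty := by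
    rcases I.eq_empty_or_nonempty with rfl | h
    · exact absurd rfl hS
    · exact h
  by_cases hcase : ∃ i ∈ I, i % t ≠ a % t
  · obtain ⟨i, hiI, hires⟩ := hcase
    have hrlt : i % t < t := Nat.mod_lt _ ht
    obtain ⟨x, hxb, hxres, hxn, hx1, hxle⟩ := key n q t a (i % t) hq ht hn ha hrlt hires
    exact ⟨x, Finset.mem_inter.mpr ⟨mem_S_of_ne hg hI hiI hx1 hxle hxn hxres, hxb⟩⟩
  · push_neg at hcase
    obtain ⟨i0, hi0⟩ := hIne
    have hIsing : I = {i0} := by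
      apply Finset.eq_singleton_iff_unique_mem.mpr
      refine ⟨hi0, fun j hj => ?_⟩
      exact mod_inj_Icc (hI hj) (hI hi0) (by rw [hcase j hj, hcase i0 hi0])
    have hodd : Odd I.card := by rw [hIsing]; simp
    rcases Nat.lt_or_ge (a + t) n with hlt | hge
    · -- x = a + t, in block, ≠ n
      have hxres : (a + t) % t = i0 % t := by
        rw [Nat.add_mod_right, (hcase i0 hi0).symm]
      refine ⟨a + t, Finset.mem_inter.mpr ⟨mem_S_of_ne hg hI hi0 (by omega) (by omega)
        (by omega) hxres, ?_⟩⟩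
      rw [cyclicBlock, Finset.mem_image]
      refine ⟨t - 1, Finset.mem_range.mpr (by omega), ?_⟩
      rw [Nat.mod_eq_of_lt (by omega : a + (t - 1) < n)]
      omega
    · -- n ∈ block, n ∈ S
      refine ⟨n, Finset.mem_inter.mpr ⟨n_mem_S (by omega) hg hodd, ?_⟩⟩
      rw [cyclicBlock, Finset.mem_image]
      refine ⟨n - 1 - a, Finset.mem_range.mpr (by omega), ?_⟩
      rw [show a + (n - 1 - a) = n - 1 by omega, Nat.mod_eq_of_lt (by omega)]
      omega
end

section
/- Let n, t be positive integers with t ≤ n, and suppose there exists a subgroup G of (𝒫({1,...,n}), Δ) of order 2^t all of whose nonempty elements intersect every cyclic block of length t modulo n. Then any family 𝒜 ⊆ 𝒫({1,...,n}) such that for all A, A' ∈ 𝒜 the complement of A Δ A' contains some cyclic block of length t modulo n satisfies |𝒜| ≤ 2^{n-t}. -/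
open Finset
open scoped symmDiff Classical

theorem stmt6 (n t : ℕ) (ht : 0 < t) (htn : t ≤ n)
    (G : Finset (Finset ℕ)) (hGsub : G ⊆ (Finset.Icc 1 n).powerset)
    (hGzero : ∅ ∈ G) (hGclosed : ∀ g ∈ G, ∀ h ∈ G, g ∆ h ∈ G)
    (hGcard : G.card = 2 ^ t)
    (hGmeet : ∀ g ∈ G, g ≠ ∅ → ∀ a < n, (g ∩ cyclicBlock n t a).Nonempty)
    (𝒜 : Finset (Finset ℕ)) (hA : 𝒜 ⊆ (Finset.Icc 1 n).powerset)
    (hagree : ∀ A ∈ 𝒜, ∀ A' ∈ 𝒜, ∃ a < n, cyclicBlock n t a ∩ (A ∆ A') = ∅) :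
    𝒜.card ≤ 2 ^ (n - t) := by
  have key : (𝒜 ×ˢ G).card ≤ ((Finset.Icc 1 n).powerset).card := by
    apply Finset.card_le_card_of_injOn (fun p => p.1 ∆ p.2)
    · rintro ⟨A, g⟩ hp
      simp only [Finset.mem_coe, Finset.mem_product] at hp ⊢
      have hA1 : A ⊆ Finset.Icc 1 n := Finset.mem_powerset.1 (hA hp.1)
      have hg1 : g ⊆ Finset.Icc 1 n := Finset.mem_powerset.1 (hGsub hp.2)
      rw [Finset.mem_powerset]
      intro x hx
      rw [Finset.mem_symmDiff] at hx
      rcases hx with ⟨h1, _⟩ | ⟨h1, _⟩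
      · exact hA1 h1
      · exact hg1 h1
    · rintro ⟨A, g⟩ hp ⟨A', g'⟩ hp' h
      simp only [Finset.mem_coe, Finset.mem_product] at hp hp'
      simp only at h
      have hAA' : A ∆ A' = g ∆ g' := by
        ext x
        have := Finset.ext_iff.1 h x
        simp only [Finset.mem_symmDiff] at this ⊢
        tauto
      have hmem : g ∆ g' ∈ G := hGclosed g hp.2 g' hp'.2
      obtain ⟨a, ha, hblock⟩ := hagree A hp.1 A' hp'.1
      have hzero : g ∆ g' = ∅ := by
        by_contra hne
        obtain ⟨x, hx⟩ := hGmeet _ hmem hne a ha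
        rw [Finset.mem_inter] at hx
        have : x ∈ cyclicBlock n t a ∩ (A ∆ A') := by
          rw [Finset.mem_inter, hAA']; exact ⟨hx.2, hx.1⟩
        rw [hblock] at this
        exact absurd this (Finset.notMem_empty x)
      have hA_eq : A = A' := by
        rw [hzero] at hAA'
        exact symmDiff_eq_bot.1 hAA'
      have hg_eq : g = g' := symmDiff_eq_bot.1 hzero
      simp [hA_eq, hg_eq]
  rw [Finset.card_product, Finset.card_powerset, hGcard, Nat.card_Icc] at key
  simp only [Nat.add_sub_cancel] at key
  have h2 : 2 ^ n = 2 ^ (n - t) * 2 ^ t := by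
    rw [← pow_add, Nat.sub_add_cancel htn]
  rw [h2] at key
  exact Nat.le_of_mul_le_mul_right key (by positivity)
end

section
/- Let n, t be positive integers with t ≤ n, and let 𝒜 ⊆ 𝒫({1,...,n}) be a family such that for any A, A' ∈ 𝒜 the intersection A ∩ A' contains some cyclic translate modulo n of {1,...,t}. Then |𝒜| ≤ 2^{n-t}. -/
open Finset
open scoped symmDiff Classical

namespace CGFS

lemma mod_eq_sub' {n x : ℕ} (h1 : n ≤ x) (h2 : x < 2 * n) : x % n = x - n := by
  rw [Nat.mod_eq_sub_mod h1]
  exact Nat.mod_eq_of_lt (by omega)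

lemma res_eq {u c j : ℕ} (hu : 0 < u) (hc : u ∣ c) (h1 : c ≤ j) (h2 : j < c + u) :
    j % u = j - c := by
  obtain ⟨e, rfl⟩ := hc
  conv_lhs => rw [show j = u * e + (j - u * e) by omega]
  rw [Nat.mul_add_mod]
  exact Nat.mod_eq_of_lt (by omega)

lemma mod_inj {u c j j' : ℕ} (hu : 0 < u) (h1 : c ≤ j) (h2 : j < c + u)
    (h1' : c ≤ j') (h2' : j' < c + u) (he : j % u = j' % u) : j = j' := by
  rcases le_total j j' with h | h
  · have hd : u ∣ j' - j := (Nat.modEq_iff_dvd' h).mp he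
    have := Nat.eq_zero_of_dvd_of_lt hd
    omega
  · have hd : u ∣ j - j' := (Nat.modEq_iff_dvd' h).mp he.symm
    have := Nat.eq_zero_of_dvd_of_lt hd
    omega

lemma exists_res {u : ℕ} (d : ℕ) {i : ℕ} (hu : 0 < u) (hi : i < u) :
    ∃ j, d ≤ j ∧ j < d + u ∧ j % u = i := by
  have hd : d % u < u := Nat.mod_lt _ hu
  have hdd : d % u + u * (d / u) = d := Nat.mod_add_div d u
  by_cases h : d % u ≤ i
  · refine ⟨u * (d / u) + i, by omega, by omega, ?_⟩
    rw [Nat.mul_add_mod]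
    exact Nat.mod_eq_of_lt hi
  · refine ⟨u * (d / u) + u + i, by omega, by omega, ?_⟩
    rw [show u * (d / u) + u + i = u * (d / u + 1) + i by ring, Nat.mul_add_mod]
    exact Nat.mod_eq_of_lt hi

def Mat : ℕ → ℕ → ℕ → ℕ → ZMod 2
  | m, u, j, i =>
    if hu : u = 0 then 0
    else if j < m - m % u then (if i = j % u then 1 else 0)
    else Mat u (m % u) i (j - (m - m % u))
  termination_by m u j i => u
  decreasing_by exact Nat.mod_lt _ (Nat.pos_of_ne_zero hu)

lemma Mat_chain {m u j : ℕ} (hu : 0 < u) (hj : j < m - m % u) (i : ℕ) :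
    Mat m u j i = if i = j % u then 1 else 0 := by
  rw [Mat]
  simp [Nat.pos_iff_ne_zero.mp hu, hj]

lemma Mat_tail {m u j : ℕ} (hu : 0 < u) (hj : ¬ j < m - m % u) (i : ℕ) :
    Mat m u j i = Mat u (m % u) i (j - (m - m % u)) := by
  rw [Mat]
  simp [Nat.pos_iff_ne_zero.mp hu, hj]

/-- evaluate a chain column against a set of rows -/
lemma chain_col_eval {m u j : ℕ} (hu : 0 < u) (hj : j < m - m % u) (S : Finset ℕ) :
    ∑ i ∈ S, Mat m u j i = if j % u ∈ S then 1 else 0 := by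
  rw [Finset.sum_congr rfl (fun i _ => Mat_chain hu hj i)]
  exact Finset.sum_ite_eq' S (j % u) (fun _ => 1)

/-- kill a set of chain columns contained in an interval of length ≤ u -/
lemma chain_kill {m u c len : ℕ} (hu : 0 < u) (hlen : len ≤ u) {S : Finset ℕ}
    (hS : S ⊆ Finset.Ico c (c + len)) (hchain : ∀ j ∈ S, j < m - m % u)
    (H : ∀ j ∈ S, ∑ j' ∈ S, Mat m u j' (j % u) = 0) : S = ∅ := by
  refine Finset.eq_empty_iff_forall_notMem.mpr (fun j0 hj0 => ?_)
  have h1 : ∑ j' ∈ S, Mat m u j' (j0 % u) = 1 := by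
    rw [Finset.sum_eq_single_of_mem j0 hj0 ?_]
    · rw [Mat_chain hu (hchain j0 hj0)]
      simp
    · intro b hb hne
      rw [Mat_chain hu (hchain b hb)]
      have hbI := Finset.mem_Ico.mp (hS hb)
      have hjI := Finset.mem_Ico.mp (hS hj0)
      have : ¬ j0 % u = b % u := by
        intro he
        exact hne (mod_inj hu (c := c) (by omega) (by omega) (by omega) (by omega) he.symm)
      simp [this]
  have := H j0 hj0
  rw [h1] at this
  exact one_ne_zero this

lemma tail_shift_sum {cl : ℕ} (S : Finset ℕ) (hS : ∀ j ∈ S, cl ≤ j) (f : ℕ → ZMod 2) :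
    ∑ j' ∈ S.image (fun j => j - cl), f j' = ∑ j ∈ S, f (j - cl) :=
  Finset.sum_image (by
    intro x hx y hy h
    have := hS x hx; have := hS y hy; simp only at h; omega)

def PAcol (m u : ℕ) : Prop := ∀ d (S : Finset ℕ), d + u ≤ m → S ⊆ Finset.Ico d (d + u) →
  (∀ i, i < u → ∑ j ∈ S, Mat m u j i = 0) → S = ∅
def PArow (m u : ℕ) : Prop := ∀ d (S : Finset ℕ), d + u ≤ m → S ⊆ Finset.Ico 0 u →
  (∀ j, d ≤ j → j < d + u → ∑ i ∈ S, Mat m u j i = 0) → S = ∅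
def PBcol (m u : ℕ) : Prop := ∀ w (S : Finset ℕ), w ≤ u → S ⊆ Finset.Ico 0 w →
  (∀ i, i < w → ∑ j ∈ S, Mat m u j i = 0) → S = ∅
def PBrow (m u : ℕ) : Prop := ∀ w (S : Finset ℕ), w ≤ u → S ⊆ Finset.Ico 0 w →
  (∀ j, j < w → ∑ i ∈ S, Mat m u j i = 0) → S = ∅
def PCcol (m u : ℕ) : Prop := ∀ w (S : Finset ℕ), w ≤ u → S ⊆ Finset.Ico (m - w) m →
  (∀ i, u - w ≤ i → i < u → ∑ j ∈ S, Mat m u j i = 0) → S = ∅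
def PCrow (m u : ℕ) : Prop := ∀ w (S : Finset ℕ), w ≤ u → S ⊆ Finset.Ico (u - w) u →
  (∀ j, m - w ≤ j → j < m → ∑ i ∈ S, Mat m u j i = 0) → S = ∅

theorem six : ∀ u, 0 < u → ∀ m, u ≤ m →
    PAcol m u ∧ PArow m u ∧ PBcol m u ∧ PBrow m u ∧ PCcol m u ∧ PCrow m u := by
  intro u
  induction u using Nat.strong_induction_on with
  | _ u IH =>
    intro hu m hum
    have hrlt : m % u < u := Nat.mod_lt _ hu
    have hmdiv : m % u + u * (m / u) = m := Nat.mod_add_div m u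
    have hdvdcl : u ∣ (m - m % u) := ⟨m / u, by omega⟩
    have hqpos : 1 ≤ m / u := (Nat.one_le_div_iff hu).mpr hum
    have hucl : u ≤ m - m % u := by
      have : u * 1 ≤ u * (m / u) := Nat.mul_le_mul_left u hqpos
      omega
    have hdvdclu : u ∣ (m - m % u - u) := Nat.dvd_sub hdvdcl dvd_rfl
    -- B row
    have hBrow : PBrow m u := by
      intro w S hw hS H
      refine Finset.eq_empty_iff_forall_notMem.mpr (fun i0 hi0 => ?_)
      have hi0w := Finset.mem_Ico.mp (hS hi0)
      have h := H i0 (by omega)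
      rw [chain_col_eval hu (by omega) S, Nat.mod_eq_of_lt (by omega)] at h
      simp [hi0] at h
    -- B col
    have hBcol : PBcol m u := by
      intro w S hw hS H
      refine chain_kill (m := m) hu hw (c := 0) (by simpa using hS) ?_ ?_
      · intro j hj
        have := Finset.mem_Ico.mp (hS hj)
        omega
      · intro j hj
        have hjw := Finset.mem_Ico.mp (hS hj)
        rw [Nat.mod_eq_of_lt (by omega)]
        exact H j (by omega)
    -- A col
    have hAcol : PAcol m u := by
      intro d S hdu hS H
      by_cases hw : d + u ≤ m - m % u
      · refine chain_kill (m := m) hu le_rfl hS ?_ ?_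
        · intro j hj
          have := Finset.mem_Ico.mp (hS hj)
          omega
        · intro j hj
          exact H (j % u) (Nat.mod_lt _ hu)
      · have hrpos : 0 < m % u := by omega
        obtain ⟨_, _, _, ihBrow, _, _⟩ := IH (m % u) hrlt hrpos u hrlt.le
        set cl := m - m % u with hcl
        set w := d + u - cl with hwdef
        have hwr : w ≤ m % u := by omega
        set S2 := S.filter (fun j => ¬ j < cl) with hS2def
        have hS2lb : ∀ j ∈ S2, cl ≤ j := by
          intro j hj
          have := (Finset.mem_filter.mp hj).2
          omega
        set S2' := S2.image (fun j => j - cl) with hS2'def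
        have hS2'sub : S2' ⊆ Finset.Ico 0 w := by
          intro j' hj'
          obtain ⟨j, hj, rfl⟩ := Finset.mem_image.mp hj'
          have h1 := (Finset.mem_filter.mp hj).2
          have h2 := Finset.mem_Ico.mp (hS (Finset.mem_filter.mp hj).1)
          simp only [Finset.mem_Ico]
          omega
        have key : ∀ i, i < w → ∑ j' ∈ S2', Mat u (m % u) i j' = 0 := by
          intro i hi
          have hH := H i (by omega)
          rw [← Finset.sum_filter_add_sum_filter_not S (fun j => j < cl)] at hH
          have hz : ∑ j ∈ S.filter (fun j => j < cl), Mat m u j i = 0 := by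
            apply Finset.sum_eq_zero
            intro j hj
            obtain ⟨hjS, hjc⟩ := Finset.mem_filter.mp hj
            rw [Mat_chain hu hjc]
            have hb := Finset.mem_Ico.mp (hS hjS)
            have hres : j % u = j - (cl - u) := by
              refine res_eq hu hdvdclu (by omega) (by omega)
            have : ¬ i = j % u := by omega
            simp [this]
          rw [hz, zero_add] at hH
          rw [tail_shift_sum S2 hS2lb, Finset.sum_congr rfl
            (fun j hj => (Mat_tail hu (by have := hS2lb j hj; omega) i).symm)]
          exact hH
        have hS2'e : S2' = ∅ := ihBrow w S2' hwr hS2'sub key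
        have hchain : ∀ j ∈ S, j < cl := by
          intro j hj
          by_contra hc
          have h1 : j ∈ S2 := Finset.mem_filter.mpr ⟨hj, hc⟩
          have h2 : j - cl ∈ S2' := Finset.mem_image_of_mem _ h1
          rw [hS2'e] at h2
          exact absurd h2 (Finset.notMem_empty _)
        refine chain_kill (m := m) hu le_rfl hS hchain ?_
        intro j hj
        exact H (j % u) (Nat.mod_lt _ hu)
    -- A row
    have hArow : PArow m u := by
      intro d S hdu hS H
      by_cases hw : d + u ≤ m - m % u
      · refine Finset.eq_empty_iff_forall_notMem.mpr (fun i0 hi0 => ?_)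
        have hi0u := Finset.mem_Ico.mp (hS hi0)
        obtain ⟨j, hj1, hj2, hj3⟩ := exists_res d hu hi0u.2
        have h := H j hj1 hj2
        rw [chain_col_eval hu (by omega) S, hj3] at h
        simp [hi0] at h
      · have hrpos : 0 < m % u := by omega
        obtain ⟨_, _, ihBcol, _, _, _⟩ := IH (m % u) hrlt hrpos u hrlt.le
        set cl := m - m % u with hcl
        set w := d + u - cl with hwdef
        have hwr : w ≤ m % u := by omega
        have hkill : ∀ i0 ∈ S, i0 < w := by
          intro i0 hi0
          by_contra hge
          have hi0u := Finset.mem_Ico.mp (hS hi0)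
          have hresj : (cl - u + i0) % u = i0 := by
            have h2 := res_eq hu hdvdclu (j := cl - u + i0) (by omega) (by omega)
            omega
          have h := H (cl - u + i0) (by omega) (by omega)
          rw [chain_col_eval hu (by omega) S, hresj] at h
          simp [hi0] at h
        have htail : ∀ j', j' < w → ∑ i ∈ S, Mat u (m % u) i j' = 0 := by
          intro j' hj'
          have h := H (cl + j') (by omega) (by omega)
          rw [Finset.sum_congr rfl (fun i _ => Mat_tail hu (j := cl + j') (by omega) i)] at h
          simpa [show cl + j' - (m - m % u) = j' by omega] using h
        exact ihBcol w S hwr (fun i0 hi0 => Finset.mem_Ico.mpr ⟨Nat.zero_le _, hkill i0 hi0⟩) htail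
    -- C col
    have hCcol : PCcol m u := by
      intro w S hw hS H
      rcases Nat.eq_zero_or_pos w with rfl | hwpos
      · refine Finset.eq_empty_iff_forall_notMem.mpr (fun j hj => ?_)
        have := Finset.mem_Ico.mp (hS hj)
        omega
      by_cases hcase : w ≤ m % u
      · have hrpos : 0 < m % u := by omega
        obtain ⟨_, _, _, _, _, ihCrow⟩ := IH (m % u) hrlt hrpos u hrlt.le
        set cl := m - m % u with hcl
        have hSlb : ∀ j ∈ S, cl ≤ j := by
          intro j hj
          have := Finset.mem_Ico.mp (hS hj)
          omega
        set S' := S.image (fun j => j - cl) with hS'def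
        have hS'sub : S' ⊆ Finset.Ico (m % u - w) (m % u) := by
          intro j' hj'
          obtain ⟨j, hj, rfl⟩ := Finset.mem_image.mp hj'
          have := Finset.mem_Ico.mp (hS hj)
          simp only [Finset.mem_Ico]
          omega
        have key : ∀ i, u - w ≤ i → i < u → ∑ j' ∈ S', Mat u (m % u) i j' = 0 := by
          intro i h1 h2
          have hH := H i h1 h2
          rw [tail_shift_sum S hSlb, Finset.sum_congr rfl
            (fun j hj => (Mat_tail hu (by have := hSlb j hj; omega) i).symm)]
          exact hH
        exact Finset.image_eq_empty.mp (ihCrow w S' hcase hS'sub key)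
      · set cl := m - m % u with hcl
        set S2 := S.filter (fun j => ¬ j < cl) with hS2def
        have hS2lb : ∀ j ∈ S2, cl ≤ j := by
          intro j hj
          have := (Finset.mem_filter.mp hj).2
          omega
        set S2' := S2.image (fun j => j - cl) with hS2'def
        have hS2'sub : S2' ⊆ Finset.Ico 0 (m % u) := by
          intro j' hj'
          obtain ⟨j, hj, rfl⟩ := Finset.mem_image.mp hj'
          have := Finset.mem_Ico.mp (hS (Finset.mem_filter.mp hj).1)
          have := (Finset.mem_filter.mp hj).2
          simp only [Finset.mem_Ico]
          omega
        have key : ∀ j', u - w ≤ j' → j' < u - w + m % u → ∑ i' ∈ S2', Mat u (m % u) j' i' = 0 := by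
          intro i h1 h2
          have hH := H i h1 (by omega)
          rw [← Finset.sum_filter_add_sum_filter_not S (fun j => j < cl)] at hH
          have hz : ∑ j ∈ S.filter (fun j => j < cl), Mat m u j i = 0 := by
            apply Finset.sum_eq_zero
            intro j hj
            obtain ⟨hjS, hjc⟩ := Finset.mem_filter.mp hj
            rw [Mat_chain hu hjc]
            have hb := Finset.mem_Ico.mp (hS hjS)
            have hres : j % u = j - (cl - u) := res_eq hu hdvdclu (by omega) (by omega)
            have : ¬ i = j % u := by omega
            simp [this]
          rw [hz, zero_add] at hH
          rw [tail_shift_sum S2 hS2lb, Finset.sum_congr rfl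
            (fun j hj => (Mat_tail hu (by have := hS2lb j hj; omega) i).symm)]
          exact hH
        have hS2'e : S2' = ∅ := by
          rcases Nat.eq_zero_or_pos (m % u) with hr0 | hrpos
          · have hS2e : S2 = ∅ := by
              refine Finset.eq_empty_iff_forall_notMem.mpr (fun j hj => ?_)
              have h1 := (Finset.mem_filter.mp hj).2
              have h2 := Finset.mem_Ico.mp (hS (Finset.mem_filter.mp hj).1)
              omega
            rw [hS2'def, hS2e]
            simp
          · obtain ⟨_, ihArow, _, _, _, _⟩ := IH (m % u) hrlt hrpos u hrlt.le
            exact ihArow (u - w) S2' (by omega) (by simpa using hS2'sub) key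
        have hchain : ∀ j ∈ S, j < cl := by
          intro j hj
          by_contra hc
          have h1 : j ∈ S2 := Finset.mem_filter.mpr ⟨hj, hc⟩
          have h2 : j - cl ∈ S2' := Finset.mem_image_of_mem _ h1
          rw [hS2'e] at h2
          exact absurd h2 (Finset.notMem_empty _)
        refine chain_kill (m := m) hu (c := m - w) (len := w - m % u) (by omega) ?_ hchain ?_
        · intro j hj
          have := Finset.mem_Ico.mp (hS hj)
          have := hchain j hj
          simp only [Finset.mem_Ico]
          omega
        · intro j hj
          have hb := Finset.mem_Ico.mp (hS hj)
          have hjc := hchain j hj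
          have hres : j % u = j - (cl - u) := res_eq hu hdvdclu (by omega) (by omega)
          exact H (j % u) (by omega) (by omega)
    -- C row
    have hCrow : PCrow m u := by
      intro w S hw hS H
      rcases Nat.eq_zero_or_pos w with rfl | hwpos
      · refine Finset.eq_empty_iff_forall_notMem.mpr (fun i hi => ?_)
        have := Finset.mem_Ico.mp (hS hi)
        omega
      by_cases hcase : w ≤ m % u
      · have hrpos : 0 < m % u := by omega
        obtain ⟨_, _, _, _, ihCcol, _⟩ := IH (m % u) hrlt hrpos u hrlt.le
        set cl := m - m % u with hcl
        have key : ∀ i, m % u - w ≤ i → i < m % u → ∑ j ∈ S, Mat u (m % u) j i = 0 := by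
          intro i h1 h2
          have hH := H (cl + i) (by omega) (by omega)
          rw [Finset.sum_congr rfl (fun x _ => Mat_tail hu (j := cl + i) (by omega) x)] at hH
          simpa [show cl + i - (m - m % u) = i by omega] using hH
        exact ihCcol w S hcase hS key
      · set cl := m - m % u with hcl
        have hkill : ∀ i0 ∈ S, i0 < u - w + m % u := by
          intro i0 hi0
          by_contra hge
          have hi0u := Finset.mem_Ico.mp (hS hi0)
          have hresj : (cl - u + i0) % u = i0 := by
            have h2 := res_eq hu hdvdclu (j := cl - u + i0) (by omega) (by omega)
            omega
          have h := H (cl - u + i0) (by omega) (by omega)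
          rw [chain_col_eval hu (by omega) S, hresj] at h
          simp [hi0] at h
        rcases Nat.eq_zero_or_pos (m % u) with hr0 | hrpos
        · refine Finset.eq_empty_iff_forall_notMem.mpr (fun i hi => ?_)
          have := Finset.mem_Ico.mp (hS hi)
          have := hkill i hi
          omega
        · obtain ⟨ihAcol, _, _, _, _, _⟩ := IH (m % u) hrlt hrpos u hrlt.le
          have htail : ∀ i, i < m % u → ∑ i0 ∈ S, Mat u (m % u) i0 i = 0 := by
            intro i hi
            have h := H (cl + i) (by omega) (by omega)
            rw [Finset.sum_congr rfl (fun x _ => Mat_tail hu (j := cl + i) (by omega) x)] at h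
            simpa [show cl + i - (m - m % u) = i by omega] using h
          exact ihAcol (u - w) S (by omega)
            (fun i0 hi0 => Finset.mem_Ico.mpr ⟨(Finset.mem_Ico.mp (hS hi0)).1, hkill i0 hi0⟩) htail
    exact ⟨hAcol, hArow, hBcol, hBrow, hCcol, hCrow⟩

def BCol (m u cl p i : ℕ) : ZMod 2 :=
  if p < cl then (if i = p % m then 1 else 0) else Mat m u i (p - cl)

lemma BCol_chain {m u cl p : ℕ} (h : p < cl) (i : ℕ) :
    BCol m u cl p i = if i = p % m then 1 else 0 := by simp [BCol, h]

lemma BCol_tail {m u cl p : ℕ} (h : ¬ p < cl) (i : ℕ) :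
    BCol m u cl p i = Mat m u i (p - cl) := by simp [BCol, h]

lemma chain_res_inj {m u cl b ℓ ℓ' : ℕ} (hu : 0 < u) (hum : u ≤ m) (hclm : m ∣ cl)
    (hmcl : m ≤ cl) (hb : b < cl + u) (hl : ℓ < m) (hl' : ℓ' < m)
    (hc : (b + ℓ) % (cl + u) < cl) (hc' : (b + ℓ') % (cl + u) < cl)
    (he : ((b + ℓ) % (cl + u)) % m = ((b + ℓ') % (cl + u)) % m) : ℓ = ℓ' := by
  obtain ⟨c, hcc⟩ := hclm
  have hm : 0 < m := lt_of_lt_of_le hu hum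
  -- a helper to get the contradiction in the cross cases
  have cross : ∀ p p' : ℕ, p' < cl → cl + u ≤ p' - p + m → p ≤ p' → m ∣ p' - p → False := by
    intro p p' h1 h2 h3 hd
    obtain ⟨k, hk⟩ := hd
    have hkc : m * k < m * c := by omega
    have hkc' : k < c := lt_of_mul_lt_mul_left hkc (Nat.zero_le m)
    have h5 : m * (k + 1) ≤ m * c := Nat.mul_le_mul_left m hkc'
    have h6 : m * (k + 1) = m * k + m := by ring
    omega
  by_cases hw : b + ℓ < cl + u <;> by_cases hw' : b + ℓ' < cl + u
  · rw [Nat.mod_eq_of_lt hw] at he hc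
    rw [Nat.mod_eq_of_lt hw'] at he hc'
    rcases le_total (b + ℓ) (b + ℓ') with h | h
    · have hd : m ∣ (b + ℓ') - (b + ℓ) := (Nat.modEq_iff_dvd' h).mp he
      have := Nat.eq_zero_of_dvd_of_lt hd
      omega
    · have hd : m ∣ (b + ℓ) - (b + ℓ') := (Nat.modEq_iff_dvd' h).mp he.symm
      have := Nat.eq_zero_of_dvd_of_lt hd
      omega
  · -- ℓ not wrapped, ℓ' wrapped
    have hsub' : (b + ℓ') % (cl + u) = b + ℓ' - (cl + u) := mod_eq_sub' (by omega) (by omega)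
    rw [Nat.mod_eq_of_lt hw] at he hc
    rw [hsub'] at he hc'
    have h3 : b + ℓ' - (cl + u) ≤ b + ℓ := by omega
    have hd : m ∣ (b + ℓ) - (b + ℓ' - (cl + u)) := (Nat.modEq_iff_dvd' h3).mp he.symm
    exact absurd (cross _ _ hc (by omega) h3 hd) not_false
  · have hsub : (b + ℓ) % (cl + u) = b + ℓ - (cl + u) := mod_eq_sub' (by omega) (by omega)
    rw [hsub] at he hc
    rw [Nat.mod_eq_of_lt hw'] at he hc'
    have h3 : b + ℓ - (cl + u) ≤ b + ℓ' := by omega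
    have hd : m ∣ (b + ℓ') - (b + ℓ - (cl + u)) := (Nat.modEq_iff_dvd' h3).mp he
    exact absurd (cross _ _ hc' (by omega) h3 hd) not_false
  · have hsub : (b + ℓ) % (cl + u) = b + ℓ - (cl + u) := mod_eq_sub' (by omega) (by omega)
    have hsub' : (b + ℓ') % (cl + u) = b + ℓ' - (cl + u) := mod_eq_sub' (by omega) (by omega)
    rw [hsub] at he hc
    rw [hsub'] at he hc'
    rcases le_total (b + ℓ - (cl + u)) (b + ℓ' - (cl + u)) with h | h
    · have hd := (Nat.modEq_iff_dvd' h).mp he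
      have := Nat.eq_zero_of_dvd_of_lt hd
      omega
    · have hd := (Nat.modEq_iff_dvd' h).mp he.symm
      have := Nat.eq_zero_of_dvd_of_lt hd
      omega

lemma master {m u cl b : ℕ} (hu : 0 < u) (hum : u ≤ m) (hclm : m ∣ cl) (hmcl : m ≤ cl)
    (hb : b < cl + u) (T : Finset ℕ) (hT : T ⊆ Finset.range m)
    (H : ∀ i, i < m → ∑ ℓ ∈ T, BCol m u cl ((b + ℓ) % (cl + u)) i = 0) : T = ∅ := by
  have hm : 0 < m := lt_of_lt_of_le hu hum
  obtain ⟨_, hArow, _, hBrow, _, hCrow⟩ := six u hu m hum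
  have hdvdclm : m ∣ cl - m := Nat.dvd_sub hclm dvd_rfl
  set Tt := T.filter (fun ℓ => ¬ (b + ℓ) % (cl + u) < cl) with hTtdef
  have hTtsub : ∀ ℓ ∈ Tt, ℓ ∈ T ∧ ¬ (b + ℓ) % (cl + u) < cl := fun ℓ hℓ => Finset.mem_filter.mp hℓ
  have hTte : Tt = ∅ := by
    by_cases h1 : b + m ≤ cl
    · refine Finset.eq_empty_iff_forall_notMem.mpr (fun ℓ hℓ => ?_)
      obtain ⟨hℓT, hcond⟩ := hTtsub ℓ hℓ
      have hr := Finset.mem_range.mp (hT hℓT)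
      rw [Nat.mod_eq_of_lt (by omega)] at hcond
      omega
    · by_cases h2 : b + m ≤ cl + u
      · -- case II : window straddles the head/tail boundary, no wraparound
        have hmem : ∀ ℓ ∈ Tt, ℓ < m ∧ cl ≤ b + ℓ ∧ (b + ℓ) % (cl + u) = b + ℓ := by
          intro ℓ hℓ
          obtain ⟨hℓT, hcond⟩ := hTtsub ℓ hℓ
          have hr := Finset.mem_range.mp (hT hℓT)
          have hq : (b + ℓ) % (cl + u) = b + ℓ := Nat.mod_eq_of_lt (by omega)
          rw [hq] at hcond
          exact ⟨hr, by omega, hq⟩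
        set S' := Tt.image (fun ℓ => b + ℓ - cl) with hS'def
        have hS'sub : S' ⊆ Finset.Ico 0 (b + m - cl) := by
          intro j' hj'
          obtain ⟨ℓ, hℓ, rfl⟩ := Finset.mem_image.mp hj'
          have := hmem ℓ hℓ
          simp only [Finset.mem_Ico]
          omega
        have key : ∀ j, j < b + m - cl → ∑ i ∈ S', Mat m u j i = 0 := by
          intro j hj
          have hH := H j (by omega)
          rw [← Finset.sum_filter_add_sum_filter_not T (fun ℓ => (b + ℓ) % (cl + u) < cl)] at hH
          have hz : ∑ ℓ ∈ T.filter (fun ℓ => (b + ℓ) % (cl + u) < cl),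
              BCol m u cl ((b + ℓ) % (cl + u)) j = 0 := by
            apply Finset.sum_eq_zero
            intro ℓ hℓ
            obtain ⟨hℓT, hcond⟩ := Finset.mem_filter.mp hℓ
            have hr := Finset.mem_range.mp (hT hℓT)
            have hq : (b + ℓ) % (cl + u) = b + ℓ := Nat.mod_eq_of_lt (by omega)
            rw [hq] at hcond ⊢
            rw [BCol_chain hcond]
            have hres : (b + ℓ) % m = b + ℓ - (cl - m) := res_eq hm hdvdclm (by omega) (by omega)
            have : ¬ j = (b + ℓ) % m := by omega
            simp [this]
          rw [hz, zero_add] at hH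
          have htr : ∑ ℓ ∈ Tt, BCol m u cl ((b + ℓ) % (cl + u)) j = ∑ i ∈ S', Mat m u j i := by
            rw [hS'def, Finset.sum_image (by
              intro x hx y hy hxy
              have := hmem x hx; have := hmem y hy; simp only at hxy
              omega)]
            apply Finset.sum_congr rfl
            intro ℓ hℓ
            obtain ⟨h1', h2', h3'⟩ := hmem ℓ hℓ
            rw [h3', BCol_tail (by omega)]
          rw [← htr]
          exact hH
        have : S' = ∅ := hBrow (b + m - cl) S' (by omega) hS'sub key
        exact Finset.image_eq_empty.mp (hS'def ▸ this)
      · by_cases h3 : cl ≤ b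
        · -- case IIIa : wraparound, window starts in the tail
          have hmem : ∀ ℓ ∈ Tt, ℓ < m ∧ b + ℓ < cl + u ∧ (b + ℓ) % (cl + u) = b + ℓ := by
            intro ℓ hℓ
            obtain ⟨hℓT, hcond⟩ := hTtsub ℓ hℓ
            have hr := Finset.mem_range.mp (hT hℓT)
            by_cases hwrap : b + ℓ < cl + u
            · exact ⟨hr, hwrap, Nat.mod_eq_of_lt hwrap⟩
            · exfalso
              rw [mod_eq_sub' (by omega) (by omega)] at hcond
              omega
          set S' := Tt.image (fun ℓ => b + ℓ - cl) with hS'def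
          have hS'sub : S' ⊆ Finset.Ico (u - (cl + u - b)) u := by
            intro j' hj'
            obtain ⟨ℓ, hℓ, rfl⟩ := Finset.mem_image.mp hj'
            obtain ⟨h1', h2', h3'⟩ := hmem ℓ hℓ
            have hcond := (hTtsub ℓ hℓ).2
            rw [h3'] at hcond
            simp only [Finset.mem_Ico]
            omega
          have key : ∀ j, m - (cl + u - b) ≤ j → j < m → ∑ i ∈ S', Mat m u j i = 0 := by
            intro j hjl hjm
            have hH := H j hjm
            rw [← Finset.sum_filter_add_sum_filter_not T (fun ℓ => (b + ℓ) % (cl + u) < cl)] at hH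
            have hz : ∑ ℓ ∈ T.filter (fun ℓ => (b + ℓ) % (cl + u) < cl),
                BCol m u cl ((b + ℓ) % (cl + u)) j = 0 := by
              apply Finset.sum_eq_zero
              intro ℓ hℓ
              obtain ⟨hℓT, hcond⟩ := Finset.mem_filter.mp hℓ
              have hr := Finset.mem_range.mp (hT hℓT)
              have hwrap : ¬ b + ℓ < cl + u := by
                intro hcon
                rw [Nat.mod_eq_of_lt hcon] at hcond
                omega
              have hq : (b + ℓ) % (cl + u) = b + ℓ - (cl + u) := mod_eq_sub' (by omega) (by omega)
              rw [hq] at hcond ⊢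
              rw [BCol_chain hcond]
              have hres : (b + ℓ - (cl + u)) % m = b + ℓ - (cl + u) := Nat.mod_eq_of_lt (by omega)
              have : ¬ j = (b + ℓ - (cl + u)) % m := by omega
              simp [this]
            rw [hz, zero_add] at hH
            have htr : ∑ ℓ ∈ Tt, BCol m u cl ((b + ℓ) % (cl + u)) j = ∑ i ∈ S', Mat m u j i := by
              rw [hS'def, Finset.sum_image (by
                intro x hx y hy hxy
                have := hmem x hx; have := hmem y hy; simp only at hxy
                omega)]
              apply Finset.sum_congr rfl
              intro ℓ hℓ
              obtain ⟨h1', h2', h3'⟩ := hmem ℓ hℓ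
              have hcond := (hTtsub ℓ hℓ).2
              rw [h3'] at hcond
              rw [h3', BCol_tail (by omega)]
            rw [← htr]
            exact hH
          have : S' = ∅ := hCrow (cl + u - b) S' (by omega) hS'sub key
          exact Finset.image_eq_empty.mp (hS'def ▸ this)
        · -- case IIIb : wraparound, window starts in the head
          have hmem : ∀ ℓ ∈ Tt, ℓ < m ∧ cl ≤ b + ℓ ∧ b + ℓ < cl + u ∧
              (b + ℓ) % (cl + u) = b + ℓ := by
            intro ℓ hℓ
            obtain ⟨hℓT, hcond⟩ := hTtsub ℓ hℓ
            have hr := Finset.mem_range.mp (hT hℓT)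
            by_cases hwrap : b + ℓ < cl + u
            · have hq := Nat.mod_eq_of_lt hwrap
              rw [hq] at hcond
              exact ⟨hr, by omega, hwrap, hq⟩
            · exfalso
              rw [mod_eq_sub' (by omega) (by omega)] at hcond
              omega
          set S' := Tt.image (fun ℓ => b + ℓ - cl) with hS'def
          have hS'sub : S' ⊆ Finset.Ico 0 u := by
            intro j' hj'
            obtain ⟨ℓ, hℓ, rfl⟩ := Finset.mem_image.mp hj'
            obtain ⟨h1', h2', h3', h4'⟩ := hmem ℓ hℓ
            simp only [Finset.mem_Ico]
            omega
          have key : ∀ j, b + m - (cl + u) ≤ j → j < b + m - (cl + u) + u →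
              ∑ i ∈ S', Mat m u j i = 0 := by
            intro j hjl hjm
            have hH := H j (by omega)
            rw [← Finset.sum_filter_add_sum_filter_not T (fun ℓ => (b + ℓ) % (cl + u) < cl)] at hH
            have hz : ∑ ℓ ∈ T.filter (fun ℓ => (b + ℓ) % (cl + u) < cl),
                BCol m u cl ((b + ℓ) % (cl + u)) j = 0 := by
              apply Finset.sum_eq_zero
              intro ℓ hℓ
              obtain ⟨hℓT, hcond⟩ := Finset.mem_filter.mp hℓ
              have hr := Finset.mem_range.mp (hT hℓT)
              by_cases hwrap : b + ℓ < cl + u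
              · have hq := Nat.mod_eq_of_lt hwrap
                rw [hq] at hcond ⊢
                rw [BCol_chain hcond]
                have hres : (b + ℓ) % m = b + ℓ - (cl - m) := res_eq hm hdvdclm (by omega) (by omega)
                have : ¬ j = (b + ℓ) % m := by omega
                simp [this]
              · have hq : (b + ℓ) % (cl + u) = b + ℓ - (cl + u) := mod_eq_sub' (by omega) (by omega)
                rw [hq] at hcond ⊢
                rw [BCol_chain hcond]
                have hres : (b + ℓ - (cl + u)) % m = b + ℓ - (cl + u) := Nat.mod_eq_of_lt (by omega)
                have : ¬ j = (b + ℓ - (cl + u)) % m := by omega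
                simp [this]
            rw [hz, zero_add] at hH
            have htr : ∑ ℓ ∈ Tt, BCol m u cl ((b + ℓ) % (cl + u)) j = ∑ i ∈ S', Mat m u j i := by
              rw [hS'def, Finset.sum_image (by
                intro x hx y hy hxy
                have := hmem x hx; have := hmem y hy; simp only at hxy
                omega)]
              apply Finset.sum_congr rfl
              intro ℓ hℓ
              obtain ⟨h1', h2', h3', h4'⟩ := hmem ℓ hℓ
              rw [h4', BCol_tail (by omega)]
            rw [← htr]
            exact hH
          have : S' = ∅ := hArow (b + m - (cl + u)) S' (by omega) hS'sub key
          exact Finset.image_eq_empty.mp (hS'def ▸ this)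
  have hchain : ∀ ℓ ∈ T, (b + ℓ) % (cl + u) < cl := by
    intro ℓ hℓ
    by_contra hc
    have : ℓ ∈ Tt := Finset.mem_filter.mpr ⟨hℓ, hc⟩
    rw [hTte] at this
    exact absurd this (Finset.notMem_empty _)
  refine Finset.eq_empty_iff_forall_notMem.mpr (fun ℓ0 hℓ0 => ?_)
  have hH := H (((b + ℓ0) % (cl + u)) % m) (Nat.mod_lt _ hm)
  rw [Finset.sum_eq_single_of_mem ℓ0 hℓ0 ?_] at hH
  · rw [BCol_chain (hchain ℓ0 hℓ0)] at hH
    simp at hH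
  · intro ℓ hℓ hne
    rw [BCol_chain (hchain ℓ hℓ)]
    have : ¬ ((b + ℓ0) % (cl + u)) % m = ((b + ℓ) % (cl + u)) % m := by
      intro he
      exact hne (chain_res_inj hu hum hclm hmcl hb (Finset.mem_range.mp (hT hℓ))
        (Finset.mem_range.mp (hT hℓ0)) (hchain ℓ hℓ) (hchain ℓ0 hℓ0) he.symm)
    simp [this]

lemma pos_decomp {n : ℕ} (hn : 0 < n) (c x : ℕ) (h1 : 1 ≤ x) (h2 : x ≤ n) :
    ∃ j, j < n ∧ (c + j) % n + 1 = x := by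
  refine ⟨(x - 1 + (n - c % n)) % n, Nat.mod_lt _ hn, ?_⟩
  have hc : c % n < n := Nat.mod_lt _ hn
  have hcd : c % n + n * (c / n) = c := Nat.mod_add_div c n
  have key : (c + (x - 1 + (n - c % n)) % n) % n = x - 1 := by
    rw [Nat.add_mod_mod]
    rw [show c + (x - 1 + (n - c % n)) = x - 1 + (n * (c / n) + n) by omega]
    rw [show n * (c / n) + n = n * (c / n + 1) by ring]
    rw [Nat.add_mul_mod_self_left]
    exact Nat.mod_eq_of_lt (by omega)
  omega

end CGFS

theorem stmt7 (n t : ℕ) (ht : 0 < t) (htn : t ≤ n)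
    (𝒜 : Finset (Finset ℕ)) (hA : 𝒜 ⊆ (Finset.Icc 1 n).powerset)
    (hint : ∀ A ∈ 𝒜, ∀ A' ∈ 𝒜, ∃ a < n, cyclicBlock n t a ⊆ A ∩ A') :
    𝒜.card ≤ 2 ^ (n - t) := by
  classical
  have hn : 0 < n := lt_of_lt_of_le ht htn
  rcases eq_or_lt_of_le htn with heq | hlt
  · -- t = n : any member equals Icc 1 n
    have hsub : 𝒜 ⊆ {Finset.Icc 1 n} := by
      intro A hA1
      obtain ⟨a, ha, hblock⟩ := hint A hA1 A hA1
      have h1 : A ⊆ Finset.Icc 1 n := Finset.mem_powerset.mp (hA hA1)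
      have h2 : Finset.Icc 1 n ⊆ A := by
        intro x hx
        obtain ⟨hx1, hx2⟩ := Finset.mem_Icc.mp hx
        obtain ⟨j, hj, hjx⟩ := CGFS.pos_decomp hn a x hx1 hx2
        have hxb : x ∈ cyclicBlock n t a := by
          simp only [cyclicBlock, Finset.mem_image, Finset.mem_range]
          exact ⟨j, by omega, hjx⟩
        exact (Finset.mem_inter.mp (hblock hxb)).1
      simp only [Finset.mem_singleton]
      exact Finset.Subset.antisymm h1 h2
    calc 𝒜.card ≤ ({Finset.Icc 1 n} : Finset (Finset ℕ)).card := Finset.card_le_card hsub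
      _ = 1 := Finset.card_singleton _
      _ ≤ 2 ^ (n - t) := Nat.one_le_two_pow
  · -- t < n
    set m := n - t with hm
    have hmpos : 0 < m := by omega
    set cl := m * ((n - 1) / m) with hcl
    have hclm : m ∣ cl := Dvd.intro _ rfl
    have hmd : (n - 1) % m + m * ((n - 1) / m) = n - 1 := Nat.mod_add_div _ _
    have hmm : (n - 1) % m < m := Nat.mod_lt _ hmpos
    have hmcl : m ≤ cl := by
      have h1 : 1 ≤ (n - 1) / m := (Nat.one_le_div_iff hmpos).mpr (by omega)
      have := Nat.mul_le_mul_left m h1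
      omega
    set u := n - cl with hu
    have hun : cl + u = n := by omega
    have hupos : 0 < u := by omega
    have hum : u ≤ m := by omega
    set Φ : Finset ℕ → (Fin m → ZMod 2) :=
      fun A i => ∑ x ∈ A, CGFS.BCol m u cl (x - 1) (i : ℕ) with hΦ
    have hinj : Set.InjOn Φ 𝒜 := by
      intro A hA1 A' hA2 hEq
      by_contra hne
      obtain ⟨a, ha, hblock⟩ := hint A hA1 A' hA2
      set b := (a + t) % n with hbdef
      have hbn : b < n := Nat.mod_lt _ hn
      set D := A ∆ A' with hD
      have hDsub : D ⊆ Finset.Icc 1 n := by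
        intro x hx
        rcases Finset.mem_symmDiff.mp hx with ⟨h1, _⟩ | ⟨h1, _⟩
        · exact Finset.mem_powerset.mp (hA hA1) h1
        · exact Finset.mem_powerset.mp (hA hA2) h1
      have hDne : D.Nonempty := by
        rcases Finset.eq_empty_or_nonempty D with he | hne'
        · rw [← Finset.bot_eq_empty] at he
          exact absurd (symmDiff_eq_bot.mp he) hne
        · exact hne'
      have hDblock : ∀ x ∈ D, x ∉ cyclicBlock n t a := by
        intro x hx hxb
        have hmem := hblock hxb
        rcases Finset.mem_symmDiff.mp hx with ⟨_, h2⟩ | ⟨_, h2⟩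
        · exact h2 (Finset.mem_inter.mp hmem).2
        · exact h2 (Finset.mem_inter.mp hmem).1
      have hDdec : ∀ x ∈ D, ∃ ℓ, ℓ < m ∧ (b + ℓ) % n + 1 = x := by
        intro x hx
        obtain ⟨hx1, hx2⟩ := Finset.mem_Icc.mp (hDsub hx)
        obtain ⟨j, hj, hjx⟩ := CGFS.pos_decomp hn a x hx1 hx2
        have hjt : ¬ j < t := by
          intro hjt
          exact hDblock x hx (by
            simp only [cyclicBlock, Finset.mem_image, Finset.mem_range]
            exact ⟨j, hjt, hjx⟩)
        refine ⟨j - t, by omega, ?_⟩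
        have hq : (b + (j - t)) % n = (a + j) % n := by
          rw [hbdef, Nat.mod_add_mod]
          congr 1
          omega
        omega
      set T := (Finset.range m).filter (fun ℓ => (b + ℓ) % n + 1 ∈ D) with hT
      have hTinj : ∀ x ∈ T, ∀ y ∈ T, (b + x) % n + 1 = (b + y) % n + 1 → x = y := by
        intro x hx y hy hxy
        have hx' := Finset.mem_range.mp (Finset.mem_filter.mp hx).1
        have hy' := Finset.mem_range.mp (Finset.mem_filter.mp hy).1
        have hq : (b + x) % n = (b + y) % n := by omega
        have h2 : x % n = y % n := Nat.ModEq.add_left_cancel' b hq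
        rw [Nat.mod_eq_of_lt (by omega), Nat.mod_eq_of_lt (by omega)] at h2
        exact h2
      have hDT : D = T.image (fun ℓ => (b + ℓ) % n + 1) := by
        ext x
        constructor
        · intro hx
          obtain ⟨ℓ, hℓ, hℓx⟩ := hDdec x hx
          refine Finset.mem_image.mpr ⟨ℓ, ?_, hℓx⟩
          exact Finset.mem_filter.mpr ⟨Finset.mem_range.mpr hℓ, by rw [hℓx]; exact hx⟩
        · intro hx
          obtain ⟨ℓ, hℓ, rfl⟩ := Finset.mem_image.mp hx
          exact (Finset.mem_filter.mp hℓ).2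
      have hDzero : ∀ i, i < m → ∑ x ∈ D, CGFS.BCol m u cl (x - 1) i = 0 := by
        intro i hi
        have hEq' : ∑ x ∈ A, CGFS.BCol m u cl (x - 1) i
            = ∑ x ∈ A', CGFS.BCol m u cl (x - 1) i := congrFun hEq ⟨i, hi⟩
        have e1 := Finset.sum_inter_add_sum_sdiff A A' (fun x => CGFS.BCol m u cl (x - 1) i)
        have e2 := Finset.sum_inter_add_sum_sdiff A' A (fun x => CGFS.BCol m u cl (x - 1) i)
        rw [Finset.inter_comm A' A] at e2
        have e3 : ∑ x ∈ A \ A', CGFS.BCol m u cl (x - 1) i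
            = ∑ x ∈ A' \ A, CGFS.BCol m u cl (x - 1) i := by
          apply add_left_cancel (a := ∑ x ∈ A ∩ A', CGFS.BCol m u cl (x - 1) i)
          rw [e1, e2, hEq']
        rw [hD, symmDiff_def, Finset.sup_eq_union, Finset.sum_union disjoint_sdiff_sdiff, e3]
        exact CharTwo.add_self_eq_zero _
      have hTzero : ∀ i, i < m → ∑ ℓ ∈ T, CGFS.BCol m u cl ((b + ℓ) % (cl + u)) i = 0 := by
        intro i hi
        have hz := hDzero i hi
        rw [hDT, Finset.sum_image hTinj] at hz
        rw [hun]
        simpa using hz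
      have hTempty : T = ∅ :=
        CGFS.master hupos hum hclm hmcl (by omega) T (Finset.filter_subset _ _) hTzero
      rw [hTempty] at hDT
      simp at hDT
      rw [hDT] at hDne
      exact Finset.not_nonempty_empty hDne
    have hcard : 𝒜.card ≤ (Finset.univ : Finset (Fin m → ZMod 2)).card :=
      Finset.card_le_card_of_injOn Φ (fun A _ => Finset.mem_univ _) hinj
    rw [Finset.card_univ, Fintype.card_fun, ZMod.card, Fintype.card_fin] at hcard
    exact hcard
end

section
/- Let n ≥ t ≥ 1 and let G_{n,t} be the subgroup of (𝒫({1,...,n}), Δ) generated by the sets g_1,...,g_t from the Euclidean algorithm construction. Then every nonempty element of G_{n,t} intersects every cyclic translate modulo n of {1,...,t}. -/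
open Finset
open scoped symmDiff Classical

def lpr (y z : ℕ) : ℕ := if y % z = 0 then z else y % z

lemma lpr_pos (y z : ℕ) (hy : 1 ≤ y) : 1 ≤ lpr y z := by
  unfold lpr
  split
  · rename_i h
    rcases Nat.eq_zero_or_pos z with hz | hz
    · subst hz; rw [Nat.mod_zero] at h; omega
    · exact hz
  · rename_i h; omega

lemma lpr_le (y z : ℕ) (hy : 1 ≤ y) : lpr y z ≤ y := by
  unfold lpr
  split
  · rename_i h
    rcases Nat.eq_zero_or_pos z with hz | hz
    · subst hz; rw [Nat.mod_zero] at h; omega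
    · exact Nat.le_of_dvd hy (Nat.dvd_of_mod_eq_zero h)
  · exact Nat.mod_le _ _

lemma lpr_le_self (y z : ℕ) (hz : 1 ≤ z) : lpr y z ≤ z := by
  unfold lpr
  split
  · rfl
  · exact le_of_lt (Nat.mod_lt _ hz)

lemma lpr_mod (y z : ℕ) : lpr y z % z = y % z := by
  unfold lpr
  split
  · rename_i h; rw [Nat.mod_self, h]
  · exact Nat.mod_mod_of_dvd y dvd_rfl

lemma symmDiffs_insert (a : ℕ) (s : Finset ℕ) (g : ℕ → Finset ℕ) (ha : a ∉ s) :
    symmDiffs (insert a s) g = g a ∆ symmDiffs s g := by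
  unfold symmDiffs
  exact Finset.fold_insert (op := ((· ∆ ·) : Finset ℕ → Finset ℕ → Finset ℕ)) ha

lemma mem_cyclicBlock (n t c v : ℕ) (hc : c < n) (ht : t ≤ n) :
    v ∈ cyclicBlock n t c ↔ ((c < v ∧ v ≤ c + t ∧ v ≤ n) ∨ (1 ≤ v ∧ v + n ≤ c + t)) := by
  unfold cyclicBlock
  simp only [Finset.mem_image, Finset.mem_range]
  constructor
  · rintro ⟨j, hj, rfl⟩
    rcases Nat.lt_or_ge (c + j) n with h | h
    · left
      rw [Nat.mod_eq_of_lt h]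
      omega
    · right
      have : (c + j) % n = c + j - n := by
        rw [Nat.mod_eq_sub_mod h, Nat.mod_eq_of_lt (by omega)]
      omega
  · rintro (⟨h1, h2, h3⟩ | ⟨h1, h2⟩)
    · refine ⟨v - 1 - c, by omega, ?_⟩
      have : c + (v - 1 - c) = v - 1 := by omega
      rw [this, Nat.mod_eq_of_lt (by omega)]
      omega
    · refine ⟨v - 1 + n - c, by omega, ?_⟩
      have h3 : c + (v - 1 + n - c) = v - 1 + n := by omega
      rw [h3, Nat.add_mod_right, Nat.mod_eq_of_lt (by omega)]
      omega

lemma cong_lt_add (a b r : ℕ) (h : a % r = b % r) (hab : a < b) : a + r ≤ b := by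
  obtain ⟨m, hm⟩ := (Nat.modEq_iff_dvd' (le_of_lt hab)).mp h
  rcases Nat.eq_zero_or_pos m with h0 | h0
  · subst h0; simp at hm; omega
  · have : r ≤ r * m := Nat.le_mul_of_pos_right r h0
    omega

lemma cong_window_eq (a b c r : ℕ) (h : a % r = b % r) (ha1 : c < a) (ha2 : a ≤ c + r)
    (hb1 : c < b) (hb2 : b ≤ c + r) : a = b := by
  rcases Nat.lt_trichotomy a b with hlt | heq | hgt
  · have := cong_lt_add a b r h hlt; omega
  · exact heq
  · have := cong_lt_add b a r h.symm hgt; omega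
theorem stmt16 (n t k : ℕ) (ht : 0 < t) (htn : t ≤ n) (hk : 1 ≤ k)
    (q ρ : ℕ → ℕ) (hρ0 : ρ 0 = n) (hρ1 : ρ 1 = t)
    (hrec : ∀ i, 1 ≤ i → i ≤ k → ρ (i - 1) = q i * ρ i + ρ (i + 1))
    (hzero : ρ (k + 1) = 0)
    (hpos : ∀ i, 1 ≤ i → i ≤ k → 0 < ρ i)
    (hdec : ∀ i, 2 ≤ i → i ≤ k → ρ i < ρ (i - 1))
    (hq : ∀ i, 1 ≤ i → i ≤ k → 0 < q i)
    (nP tP : ℕ → ℕ)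
    (hnP : ∀ m, nP m = ∑ j ∈ Finset.Icc 1 m, q (2 * j - 1) * ρ (2 * j - 1))
    (htP : ∀ m, tP m = ∑ j ∈ Finset.Icc 1 m, q (2 * j) * ρ (2 * j))
    (aval : ℕ → ℕ)
    (haval : ∀ i, 1 ≤ i → i ≤ t →
      tP (aval i) < i ∧ ∀ m, tP m < i → m ≤ aval i)
    (g : ℕ → Finset ℕ)
    (hg : ∀ i, 1 ≤ i → i ≤ t → g i =
      ((Finset.range (aval i + 1)).biUnion fun j =>
        (Finset.Ioc (nP j) (nP (j + 1))).filter fun x =>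
          (x - nP j) % ρ (2 * j + 1) = (i - tP j) % ρ (2 * j + 1)) ∪
      (if k = 2 * aval i + 1 then ∅
        else {nP (aval i + 1) + lpr (i - tP (aval i)) (ρ (2 * aval i + 2))})) :
    ∀ I ⊆ Finset.Icc 1 t, symmDiffs I g ≠ ∅ →
      ∀ c < n, (symmDiffs I g ∩ cyclicBlock n t c).Nonempty := by
  classical
  -- ## basic arithmetic layer
  have hnP0 : nP 0 = 0 := by rw [hnP]; simp
  have htP0 : tP 0 = 0 := by rw [htP]; simp
  have hnPstep : ∀ j, nP (j+1) = nP j + q (2*j+1) * ρ (2*j+1) := by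
    intro j
    rw [hnP (j+1), hnP j, Finset.sum_Icc_succ_top (by omega : 1 ≤ j + 1)]
    have e : 2*(j+1)-1 = 2*j+1 := by omega
    rw [e]
  have htPstep : ∀ j, tP (j+1) = tP j + q (2*j+2) * ρ (2*j+2) := by
    intro j
    rw [htP (j+1), htP j, Finset.sum_Icc_succ_top (by omega : 1 ≤ j + 1)]
    have e : 2*(j+1) = 2*j+2 := by omega
    rw [e]
  have htPmono : ∀ a b : ℕ, a ≤ b → tP a ≤ tP b := by
    intro a b hab
    rw [htP, htP]
    exact Finset.sum_le_sum_of_subset (Finset.Icc_subset_Icc_right hab)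
  have hnPmono : ∀ a b : ℕ, a ≤ b → nP a ≤ nP b := by
    intro a b hab
    rw [hnP, hnP]
    exact Finset.sum_le_sum_of_subset (Finset.Icc_subset_Icc_right hab)
  have hanti1 : ∀ a, 1 ≤ a → a ≤ k → ρ (a+1) ≤ ρ a := by
    intro a h1 h2
    rcases Nat.lt_or_ge a k with h | h
    · have := hdec (a+1) (by omega) (by omega)
      have e : a + 1 - 1 = a := by omega
      rw [e] at this
      omega
    · have : a = k := by omega
      subst this
      rw [hzero]
      omega
  have hanti : ∀ a b, 1 ≤ a → a ≤ b → b ≤ k+1 → ρ b ≤ ρ a := by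
    intro a b h1 h2 h3
    induction b with
    | zero => omega
    | succ b ih =>
      rcases Nat.lt_or_ge b a with h | h
      · have : a = b + 1 := by omega
        subst this; rfl
      · exact le_trans (hanti1 b (by omega) (by omega)) (ih h (by omega))
  have hρle_t : ∀ a, 1 ≤ a → a ≤ k+1 → ρ a ≤ t := by
    intro a h1 h2
    have := hanti 1 a le_rfl h1 h2
    omega
  have hnPt : ∀ m, 2*m ≤ k+1 → nP m + ρ (2*m) = n := by
    intro m
    induction m with
    | zero => intro _; simpa [hnP0, hρ0]
    | succ m ih =>
      intro h
      have h2 : 2*m+1 ≤ k := by omega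
      have hr := hrec (2*m+1) (by omega) h2
      have e1 : 2*m+1-1 = 2*m := by omega
      have e2 : 2*m+1+1 = 2*(m+1) := by omega
      rw [e1, e2] at hr
      have hs := hnPstep m
      have := ih (by omega)
      omega
  have htPt : ∀ m, 2*m ≤ k → tP m + ρ (2*m+1) = t := by
    intro m
    induction m with
    | zero => intro _; simpa [htP0, hρ1]
    | succ m ih =>
      intro h
      have h2 : 2*m+2 ≤ k := by omega
      have hr := hrec (2*m+2) (by omega) h2
      have e1 : 2*m+2-1 = 2*m+1 := by omega
      rw [e1] at hr
      have hs := htPstep m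
      have e3 : 2*(m+1) = 2*m+2 := by omega
      rw [e3]
      have := ih (by omega)
      omega
  have havalIff : ∀ i, 1 ≤ i → i ≤ t → ∀ j, (j ≤ aval i ↔ tP j < i) := by
    intro i h1 h2 j
    constructor
    · intro hj
      exact lt_of_le_of_lt (htPmono _ _ hj) (haval i h1 h2).1
    · intro hj
      exact (haval i h1 h2).2 j hj
  -- membership characterization
  have hmem : ∀ i, 1 ≤ i → i ≤ t → ∀ x,
      (x ∈ g i ↔ ((∃ j, j ≤ aval i ∧ (nP j < x ∧ x ≤ nP (j+1)) ∧
          (x - nP j) % ρ (2*j+1) = (i - tP j) % ρ (2*j+1)) ∨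
        (k ≠ 2 * aval i + 1 ∧
          x = nP (aval i + 1) + lpr (i - tP (aval i)) (ρ (2 * aval i + 2))))) := by
    intro i h1 h2 x
    rw [hg i h1 h2]
    simp only [Finset.mem_union, Finset.mem_biUnion, Finset.mem_range, Finset.mem_filter,
      Finset.mem_Ioc, Nat.lt_succ_iff]
    by_cases hcase : k = 2 * aval i + 1
    · rw [if_pos hcase]
      simp only [Finset.notMem_empty, or_false, ne_eq, hcase, not_true_eq_false,
        false_and, or_false]
    · rw [if_neg hcase]
      simp only [Finset.mem_singleton, ne_eq, hcase, not_false_eq_true, true_and]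
  -- interval member constructor
  have hmkInt : ∀ i, 1 ≤ i → i ≤ t → ∀ j m, j ≤ aval i → 2*j+1 ≤ k → m + 1 ≤ q (2*j+1) →
      nP j + (i - tP j) + m * ρ (2*j+1) ∈ g i := by
    intro i h1 h2 j m hj hk2 hm
    rw [hmem i h1 h2]
    left
    have htPj : tP j < i := (havalIff i h1 h2 j).1 hj
    have htt : tP j + ρ (2*j+1) = t := htPt j (by omega)
    have hρpos : 0 < ρ (2*j+1) := hpos _ (by omega) hk2
    have hile : i - tP j ≤ ρ (2*j+1) := by omega
    refine ⟨j, hj, ⟨?_, ?_⟩, ?_⟩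
    · omega
    · rw [hnPstep j]
      have h3 : (m+1) * ρ (2*j+1) ≤ q (2*j+1) * ρ (2*j+1) := Nat.mul_le_mul_right _ hm
      have h4 : (m+1) * ρ (2*j+1) = m * ρ (2*j+1) + ρ (2*j+1) := by ring
      omega
    · have e : nP j + (i - tP j) + m * ρ (2*j+1) - nP j = (i - tP j) + m * ρ (2*j+1) := by
        omega
      rw [e, Nat.add_mul_mod_self_right]
  have hlprK : ∀ y0 z0 q0 : ℕ, 1 ≤ y0 → 0 < z0 → y0 ≤ q0 * z0 →
      y0 + z0 ≤ q0 * z0 + lpr y0 z0 := by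
    intro y0 z0 q0 hy hz hq0
    have hLy : lpr y0 z0 ≤ y0 := lpr_le _ _ hy
    have hL1 : 1 ≤ lpr y0 z0 := lpr_pos _ _ hy
    have hmod : lpr y0 z0 % z0 = y0 % z0 := lpr_mod _ _
    obtain ⟨m, hm⟩ := (Nat.modEq_iff_dvd' hLy).1 hmod
    have hmlt : m < q0 := by
      apply Nat.lt_of_mul_lt_mul_left (a := z0)
      have h6 : z0 * q0 = q0 * z0 := mul_comm _ _
      omega
    have hmq : z0 * (m+1) ≤ z0 * q0 := Nat.mul_le_mul_left z0 hmlt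
    have h5 : z0*(m+1) = z0*m+z0 := by ring
    have h6 : z0 * q0 = q0 * z0 := mul_comm _ _
    omega
  have hlprD : ∀ y0 z0 : ℕ, 1 ≤ y0 → z0 ∣ (y0 + z0 - lpr y0 z0) := by
    intro y0 z0 hy
    have hLy : lpr y0 z0 ≤ y0 := lpr_le _ _ hy
    have hmod : lpr y0 z0 % z0 = y0 % z0 := lpr_mod _ _
    obtain ⟨m, hm⟩ := (Nat.modEq_iff_dvd' hLy).1 hmod
    refine ⟨m+1, ?_⟩
    have h5 : z0*(m+1) = z0*m+z0 := by ring
    omega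
  -- analysis of interval membership
  have hintP : ∀ i, 1 ≤ i → i ≤ t → ∀ x, x ≤ n → ∀ j, j ≤ aval i → nP j < x → x ≤ nP (j+1) →
      (x - nP j) % ρ (2*j+1) = (i - tP j) % ρ (2*j+1) →
      2*j+1 ≤ k ∧ tP j < i ∧ tP j + ρ (2*j+1) = t ∧ nP j + ρ (2*j) = n ∧
        nP j + (i - tP j) ≤ x ∧ ρ (2*j+1) ∣ (x - (nP j + (i - tP j))) := by
    intro i h1 h2 x hxn j hj hx1 hx2 hmod
    have hjk : 2*j+1 ≤ k := by
      by_contra hcon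
      push_neg at hcon
      rcases Nat.even_or_odd k with ⟨m0, hm0⟩ | ⟨m0, hm0⟩
      · have htm0 : tP m0 + ρ (2*m0+1) = t := htPt m0 (by omega)
        have h0 : ρ (2*m0+1) = 0 := by rw [show 2*m0+1 = k+1 by omega]; exact hzero
        have hjm : m0 ≤ j := by omega
        have := htPmono m0 j hjm
        have htpj : tP j < i := (havalIff i h1 h2 j).1 hj
        omega
      · have hnm : nP (m0+1) + ρ (2*(m0+1)) = n := hnPt (m0+1) (by omega)
        have h0 : ρ (2*(m0+1)) = 0 := by rw [show 2*(m0+1) = k+1 by omega]; exact hzero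
        have hjm : m0 + 1 ≤ j := by omega
        have := hnPmono (m0+1) j hjm
        omega
    have htpj : tP j < i := (havalIff i h1 h2 j).1 hj
    have htt : tP j + ρ (2*j+1) = t := htPt j (by omega)
    have hnn : nP j + ρ (2*j) = n := hnPt j (by omega)
    have hρpos : 0 < ρ (2*j+1) := hpos _ (by omega) hjk
    have hiub : i - tP j ≤ ρ (2*j+1) := by omega
    have hxlb : 1 ≤ x - nP j := by omega
    have hvu : (i - tP j) ≤ (x - nP j) := by
      rcases Nat.lt_or_ge (x - nP j) (i - tP j) with h | h
      · exfalso
        have hur : (x - nP j) % ρ (2*j+1) = x - nP j := Nat.mod_eq_of_lt (by omega)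
        rcases Nat.lt_or_ge (i - tP j) (ρ (2*j+1)) with h2 | h2
        · rw [Nat.mod_eq_of_lt h2] at hmod; omega
        · have he : i - tP j = ρ (2*j+1) := by omega
          rw [he, Nat.mod_self] at hmod; omega
      · exact h
    have hdvd : ρ (2*j+1) ∣ (x - nP j) - (i - tP j) := (Nat.modEq_iff_dvd' hvu).1 hmod.symm
    have he2 : x - (nP j + (i - tP j)) = (x - nP j) - (i - tP j) := by omega
    rw [he2]
    exact ⟨hjk, htpj, htt, hnn, by omega, hdvd⟩
  -- analysis of singleton membership
  have hsingP : ∀ i, 1 ≤ i → i ≤ t → ∀ x, x ≤ n → k ≠ 2 * aval i + 1 →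
      x = nP (aval i + 1) + lpr (i - tP (aval i)) (ρ (2 * aval i + 2)) →
      ∃ d, 2*aval i+2 ≤ k ∧ x + d = n ∧ d < ρ (2*aval i+2) ∧
        i + d ≤ tP (aval i + 1) ∧ tP (aval i) + (ρ (2*aval i+2) - d) ≤ i ∧
        ρ (2*aval i+2) ∣ (i + d - tP (aval i)) := by
    intro i h1 h2 x hxn hkneq hxe
    have htpa : tP (aval i) < i := (haval i h1 h2).1
    have hiub : i ≤ tP (aval i + 1) := by
      by_contra hcon
      push_neg at hcon
      have := (haval i h1 h2).2 (aval i + 1) hcon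
      omega
    have hL1 : 1 ≤ lpr (i - tP (aval i)) (ρ (2*aval i+2)) := lpr_pos _ _ (by omega)
    have hak : 2*aval i+2 ≤ k := by
      by_contra hcon
      push_neg at hcon
      have hkneq' : k ≤ 2*aval i := by omega
      rcases Nat.even_or_odd k with ⟨m0, hm0⟩ | ⟨m0, hm0⟩
      · have htm0 : tP m0 + ρ (2*m0+1) = t := htPt m0 (by omega)
        have h0 : ρ (2*m0+1) = 0 := by rw [show 2*m0+1 = k+1 by omega]; exact hzero
        have := htPmono m0 (aval i) (by omega)
        omega
      · have hnm : nP (m0+1) + ρ (2*(m0+1)) = n := hnPt (m0+1) (by omega)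
        have h0 : ρ (2*(m0+1)) = 0 := by rw [show 2*(m0+1) = k+1 by omega]; exact hzero
        have := hnPmono (m0+1) (aval i + 1) (by omega)
        omega
    have hzpos : 0 < ρ (2*aval i+2) := hpos _ (by omega) hak
    have hnPa : nP (aval i+1) + ρ (2*aval i+2) = n := by
      have := hnPt (aval i+1) (by omega)
      rw [show 2*(aval i+1) = 2*aval i+2 from by omega] at this
      exact this
    have hLz : lpr (i - tP (aval i)) (ρ (2*aval i+2)) ≤ ρ (2*aval i+2) :=
      lpr_le_self _ _ hzpos
    have hLy : lpr (i - tP (aval i)) (ρ (2*aval i+2)) ≤ i - tP (aval i) :=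
      lpr_le _ _ (by omega)
    have hstep : tP (aval i+1) = tP (aval i) + q (2*aval i+2) * ρ (2*aval i+2) :=
      htPstep (aval i)
    have hKK := hlprK (i - tP (aval i)) (ρ (2*aval i+2)) (q (2*aval i+2))
      (by omega) hzpos (by omega)
    have hDD := hlprD (i - tP (aval i)) (ρ (2*aval i+2)) (by omega)
    refine ⟨ρ (2*aval i+2) - lpr (i - tP (aval i)) (ρ (2*aval i+2)), hak, by omega,
      by omega, by omega, by omega, ?_⟩
    have he : i + (ρ (2*aval i+2) - lpr (i - tP (aval i)) (ρ (2*aval i+2))) - tP (aval i)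
        = (i - tP (aval i)) + ρ (2*aval i+2) - lpr (i - tP (aval i)) (ρ (2*aval i+2)) := by
      omega
    rw [he]
    exact hDD
  have hself : ∀ i, 1 ≤ i → i ≤ t → i ∈ g i := by
    intro i h1 h2
    have := hmkInt i h1 h2 0 0 (Nat.zero_le _) (by omega) (hq 1 le_rfl hk)
    simpa [hnP0, htP0] using this
  -- top element
  have hTOP : ∀ i, 1 ≤ i → i ≤ t → ∃ y, y ∈ g i ∧ n + i ≤ y + t ∧ y ≤ n := by
    intro i h1 h2
    have htpa : tP (aval i) < i := (haval i h1 h2).1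
    have hiub : i ≤ tP (aval i + 1) := by
      by_contra hcon
      push_neg at hcon
      have := (haval i h1 h2).2 (aval i + 1) hcon
      omega
    by_cases hclean : 2 * aval i + 2 ≤ k
    · have hzpos : 0 < ρ (2*aval i+2) := hpos _ (by omega) hclean
      have hnPa : nP (aval i+1) + ρ (2*aval i+2) = n := by
        have := hnPt (aval i+1) (by omega)
        rw [show 2*(aval i+1) = 2*aval i+2 from by omega] at this
        exact this
      have htta : tP (aval i+1) + ρ (2*(aval i+1)+1) = t := htPt (aval i+1) (by omega)
      have hstep : tP (aval i+1) = tP (aval i) + q (2*aval i+2) * ρ (2*aval i+2) :=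
        htPstep (aval i)
      have hKK := hlprK (i - tP (aval i)) (ρ (2*aval i+2)) (q (2*aval i+2))
        (by omega) hzpos (by omega)
      have hLz : lpr (i - tP (aval i)) (ρ (2*aval i+2)) ≤ ρ (2*aval i+2) :=
        lpr_le_self _ _ hzpos
      refine ⟨nP (aval i + 1) + lpr (i - tP (aval i)) (ρ (2*aval i+2)), ?_, by omega, by omega⟩
      rw [hmem i h1 h2]
      right
      exact ⟨by omega, rfl⟩
    · push_neg at hclean
      obtain ⟨m0, hm0, hm0le⟩ : ∃ m0, k = 2*m0+1 ∧ m0 ≤ aval i := by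
        rcases Nat.even_or_odd k with ⟨w, hw⟩ | ⟨w, hw⟩
        · exfalso
          have htm0 : tP w + ρ (2*w+1) = t := htPt w (by omega)
          have h0 : ρ (2*w+1) = 0 := by rw [show 2*w+1 = k+1 by omega]; exact hzero
          rcases Nat.lt_or_ge (aval i) w with h | h
          · omega
          · have := htPmono w (aval i) h; omega
        · exact ⟨w, by omega, by omega⟩
      have hm0k : 2*m0+1 ≤ k := by omega
      have htm : tP m0 + ρ (2*m0+1) = t := htPt m0 (by omega)
      have htpm : tP m0 < i := (havalIff i h1 h2 m0).1 hm0le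
      have hq0 : 1 ≤ q (2*m0+1) := hq _ (by omega) hm0k
      have hnm : nP (m0+1) = n := by
        have := hnPt (m0+1) (by omega)
        rw [show 2*(m0+1) = k+1 by omega] at this
        rw [hzero] at this
        omega
      have hstep := hnPstep m0
      have h5 : (q (2*m0+1) - 1) * ρ (2*m0+1) = q (2*m0+1) * ρ (2*m0+1) - ρ (2*m0+1) :=
        Nat.sub_one_mul _ _
      have h6 : ρ (2*m0+1) ≤ q (2*m0+1) * ρ (2*m0+1) := Nat.le_mul_of_pos_left _ hq0
      exact ⟨nP m0 + (i - tP m0) + (q (2*m0+1) - 1) * ρ (2*m0+1),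
        hmkInt i h1 h2 m0 _ hm0le hm0k (by omega), by omega, by omega⟩
  -- gap lemma
  have hGAP : ∀ i, 1 ≤ i → i ≤ t → ∀ y, y ∈ g i → y ≤ n → t < y →
      ∃ p, p ∈ g i ∧ p < y ∧ y ≤ p + t := by
    intro i h1 h2 y hy hyn hty
    rw [hmem i h1 h2] at hy
    rcases hy with ⟨j, hj, ⟨hx1, hx2⟩, hmod⟩ | ⟨hkne, hxe⟩
    · obtain ⟨hjk, htpj, htt, hnn, hle, hdvd⟩ := hintP i h1 h2 y hyn j hj hx1 hx2 hmod
      have hρpos : 0 < ρ (2*j+1) := hpos _ (by omega) hjk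
      have hρlt : ρ (2*j+1) ≤ t := hρle_t _ (by omega) (by omega)
      rcases Nat.eq_or_lt_of_le hle with heq | hlt
      · rcases Nat.eq_zero_or_pos j with hj0 | hj0
        · exfalso; subst hj0; rw [hnP0, htP0] at heq; omega
        obtain ⟨j2, rfl⟩ : ∃ j2, j = j2 + 1 := ⟨j - 1, by omega⟩
        have hj2k : 2*j2+1 ≤ k := by omega
        have hq2 : 1 ≤ q (2*j2+1) := hq _ (by omega) hj2k
        have htpj2 : tP j2 < i := by
          have := htPmono j2 (j2+1) (by omega); omega
        have hs := hnPstep j2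
        have hts := htPstep j2
        have hr : ρ (2*j2+1) = q (2*j2+2) * ρ (2*j2+2) + ρ (2*(j2+1)+1) := by
          have := hrec (2*j2+2) (by omega) (by omega)
          rw [show 2*j2+2-1 = 2*j2+1 from by omega,
            show 2*j2+2+1 = 2*(j2+1)+1 from by omega] at this
          exact this
        have h5 : (q (2*j2+1) - 1) * ρ (2*j2+1)
            = q (2*j2+1) * ρ (2*j2+1) - ρ (2*j2+1) := Nat.sub_one_mul _ _
        have h6 : ρ (2*j2+1) ≤ q (2*j2+1) * ρ (2*j2+1) := Nat.le_mul_of_pos_left _ hq2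
        have hpos2 : 0 < ρ (2*(j2+1)+1) := hpos _ (by omega) hjk
        have hρlt2 : ρ (2*(j2+1)+1) ≤ t := hρle_t _ (by omega) (by omega)
        exact ⟨nP j2 + (i - tP j2) + (q (2*j2+1) - 1) * ρ (2*j2+1),
          hmkInt i h1 h2 j2 _ (by omega) hj2k (by omega), by omega, by omega⟩
      · obtain ⟨m, hm⟩ := hdvd
        have hm1 : 1 ≤ m := by
          rcases Nat.eq_zero_or_pos m with h0 | h0
          · exfalso; subst h0; simp at hm; omega
          · exact h0
        obtain ⟨m2, rfl⟩ : ∃ m2, m = m2 + 1 := ⟨m - 1, by omega⟩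
        have h5m : ρ (2*j+1) * (m2+1) = ρ (2*j+1) * m2 + ρ (2*j+1) := by ring
        refine ⟨y - ρ (2*j+1), ?_, by omega, by omega⟩
        rw [hmem i h1 h2]; left
        refine ⟨j, hj, ⟨by omega, by omega⟩, ?_⟩
        have he : y - ρ (2*j+1) - nP j = (i - tP j) + ρ (2*j+1) * m2 := by omega
        rw [he, Nat.add_mul_mod_self_left]
    · obtain ⟨d, hak, hxd, hdz, hid, htpl, hdvdS⟩ := hsingP i h1 h2 y hyn hkne hxe
      have ha1k : 2*aval i+1 ≤ k := by omega
      have hq1' : 1 ≤ q (2*aval i+1) := hq _ (by omega) ha1k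
      have htpa : tP (aval i) < i := (haval i h1 h2).1
      have htta : tP (aval i) + ρ (2*aval i+1) = t := htPt (aval i) (by omega)
      have hs := hnPstep (aval i)
      have hnPa : nP (aval i+1) + ρ (2*aval i+2) = n := by
        have := hnPt (aval i+1) (by omega)
        rw [show 2*(aval i+1) = 2*aval i+2 from by omega] at this
        exact this
      have h5 : (q (2*aval i+1) - 1) * ρ (2*aval i+1)
          = q (2*aval i+1) * ρ (2*aval i+1) - ρ (2*aval i+1) := Nat.sub_one_mul _ _
      have h6 : ρ (2*aval i+1) ≤ q (2*aval i+1) * ρ (2*aval i+1) :=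
        Nat.le_mul_of_pos_left _ hq1'
      have hile : i - tP (aval i) ≤ ρ (2*aval i+1) := by omega
      exact ⟨nP (aval i) + (i - tP (aval i)) + (q (2*aval i+1) - 1) * ρ (2*aval i+1),
        hmkInt i h1 h2 (aval i) _ (le_refl _) ha1k (by omega), by omega, by omega⟩
  -- every block is hit
  have hP1 : ∀ i, 1 ≤ i → i ≤ t → ∀ c, c < n → ∃ y, y ∈ g i ∧ y ∈ cyclicBlock n t c := by
    intro i h1 h2 c hc
    obtain ⟨T, hTg, hTlb, hTn⟩ := hTOP i h1 h2
    rcases le_or_gt (c + t) n with hnw | hw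
    · have hSne : (g i ∩ Finset.Ioc c n).Nonempty := by
        refine ⟨T, Finset.mem_inter.2 ⟨hTg, Finset.mem_Ioc.2 ⟨by omega, hTn⟩⟩⟩
      have hyS := Finset.min'_mem _ hSne
      obtain ⟨hyg, hyIoc⟩ := Finset.mem_inter.1 hyS
      obtain ⟨hyc, hyn⟩ := Finset.mem_Ioc.1 hyIoc
      have hyct : (g i ∩ Finset.Ioc c n).min' hSne ≤ c + t := by
        by_contra hcon
        push_neg at hcon
        have hty : t < (g i ∩ Finset.Ioc c n).min' hSne := by omega
        obtain ⟨p, hpg, hpy, hple⟩ := hGAP i h1 h2 _ hyg hyn hty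
        have hpS : p ∈ g i ∩ Finset.Ioc c n :=
          Finset.mem_inter.2 ⟨hpg, Finset.mem_Ioc.2 ⟨by omega, by omega⟩⟩
        have := Finset.min'_le _ p hpS
        omega
      exact ⟨_, hyg, (mem_cyclicBlock n t c _ hc htn).2 (Or.inl ⟨hyc, hyct, hyn⟩)⟩
    · rcases le_or_gt (i + n) (c + t) with hlow | hhigh
      · exact ⟨i, hself i h1 h2,
          (mem_cyclicBlock n t c i hc htn).2 (Or.inr ⟨h1, by omega⟩)⟩
      · exact ⟨T, hTg,
          (mem_cyclicBlock n t c T hc htn).2 (Or.inl ⟨by omega, by omega, hTn⟩)⟩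
  -- main collision lemma
  have hMAIN : ∀ i i', 1 ≤ i → i < i' → i' ≤ t → ∀ x, x ∈ g i → x ∈ g i' → x ≤ n →
      ∃ y, y ∈ g i' ∧ n + i ≤ y + t ∧ y < x := by
    intro i i' h1 hii h2t x hxi hxi' hxn
    have h1' : 1 ≤ i' := by omega
    have h2 : i ≤ t := by omega
    rw [hmem i' h1' h2t] at hxi'
    rw [hmem i h1 h2] at hxi
    rcases hxi' with ⟨j', hj', ⟨hx1', hx2'⟩, hmod'⟩ | ⟨hkne', hxe'⟩
    · obtain ⟨hjk', htpj', htt', hnn', hle', hdvd'⟩ :=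
        hintP i' h1' h2t x hxn j' hj' hx1' hx2' hmod'
      have hρpos' : 0 < ρ (2*j'+1) := hpos _ (by omega) hjk'
      rcases hxi with ⟨j2, hj2, ⟨hy1, hy2⟩, hmod2⟩ | ⟨hkne, hxe⟩
      · exfalso
        obtain ⟨hjk2, htpj2, htt2, hnn2, hle2, hdvd2⟩ :=
          hintP i h1 h2 x hxn j2 hj2 hy1 hy2 hmod2
        have hj2j : j2 = j' := by
          rcases Nat.lt_trichotomy j2 j' with h | h | h
          · exfalso; have := hnPmono (j2+1) j' (by omega); omega
          · exact h
          · exfalso; have := hnPmono (j'+1) j2 (by omega); omega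
        subst hj2j
        have hme : (i - tP j2) % ρ (2*j2+1) = (i' - tP j2) % ρ (2*j2+1) :=
          hmod2.symm.trans hmod'
        have := cong_window_eq (i - tP j2) (i' - tP j2) 0 (ρ (2*j2+1)) hme
          (by omega) (by omega) (by omega) (by omega)
        omega
      · obtain ⟨d, hak, hxd, hdz, hid, htpl, hdvdS⟩ := hsingP i h1 h2 x hxn hkne hxe
        have hnn2' : nP (j'+1) + ρ (2*j'+2) = n := by
          have := hnPt (j'+1) (by omega)
          rw [show 2*(j'+1) = 2*j'+2 from by omega] at this
          exact this
        have hdge : ρ (2*j'+2) ≤ d := by omega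
        have haj : aval i + 1 ≤ j' := by
          by_contra hcon
          push_neg at hcon
          have := hanti (2*j'+2) (2*aval i+2) (by omega) (by omega) (by omega)
          omega
        have htmono := htPmono (aval i + 1) j' haj
        have hkey : i + d + ρ (2*j'+1) ≤ t := by omega
        rcases Nat.eq_or_lt_of_le hle' with heq | hlt
        · obtain ⟨j2, rfl⟩ : ∃ j2, j' = j2 + 1 := ⟨j' - 1, by omega⟩
          have hj2k : 2*j2+1 ≤ k := by omega
          have hq2 : 1 ≤ q (2*j2+1) := hq _ (by omega) hj2k
          have htpj2 : tP j2 < i' := by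
            have := htPmono j2 (j2+1) (by omega); omega
          have hs := hnPstep j2
          have hts := htPstep j2
          have hr : ρ (2*j2+1) = q (2*j2+2) * ρ (2*j2+2) + ρ (2*(j2+1)+1) := by
            have := hrec (2*j2+2) (by omega) (by omega)
            rw [show 2*j2+2-1 = 2*j2+1 from by omega,
              show 2*j2+2+1 = 2*(j2+1)+1 from by omega] at this
            exact this
          have h5 : (q (2*j2+1) - 1) * ρ (2*j2+1)
              = q (2*j2+1) * ρ (2*j2+1) - ρ (2*j2+1) := Nat.sub_one_mul _ _
          have h6 : ρ (2*j2+1) ≤ q (2*j2+1) * ρ (2*j2+1) :=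
            Nat.le_mul_of_pos_left _ hq2
          have hpos2 : 0 < ρ (2*(j2+1)+1) := hpos _ (by omega) hjk'
          exact ⟨nP j2 + (i' - tP j2) + (q (2*j2+1) - 1) * ρ (2*j2+1),
            hmkInt i' h1' h2t j2 _ (by omega) hj2k (by omega), by omega, by omega⟩
        · obtain ⟨m, hm⟩ := hdvd'
          have hm1 : 1 ≤ m := by
            rcases Nat.eq_zero_or_pos m with h0 | h0
            · exfalso; subst h0; simp at hm; omega
            · exact h0
          obtain ⟨m2, rfl⟩ : ∃ m2, m = m2 + 1 := ⟨m - 1, by omega⟩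
          have h5m : ρ (2*j'+1) * (m2+1) = ρ (2*j'+1) * m2 + ρ (2*j'+1) := by ring
          refine ⟨x - ρ (2*j'+1), ?_, by omega, by omega⟩
          rw [hmem i' h1' h2t]; left
          refine ⟨j', hj', ⟨by omega, by omega⟩, ?_⟩
          have he : x - ρ (2*j'+1) - nP j' = (i' - tP j') + ρ (2*j'+1) * m2 := by omega
          rw [he, Nat.add_mul_mod_self_left]
    · obtain ⟨d', hak', hxd', hdz', hid', htpl', hdvdS'⟩ :=
        hsingP i' h1' h2t x hxn hkne' hxe'
      have ha1k' : 2*aval i'+1 ≤ k := by omega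
      have hq1' : 1 ≤ q (2*aval i'+1) := hq _ (by omega) ha1k'
      have htpa' : tP (aval i') < i' := (haval i' h1' h2t).1
      have htta' : tP (aval i') + ρ (2*aval i'+1) = t := htPt (aval i') (by omega)
      have hs' := hnPstep (aval i')
      have hnPa' : nP (aval i'+1) + ρ (2*aval i'+2) = n := by
        have := hnPt (aval i'+1) (by omega)
        rw [show 2*(aval i'+1) = 2*aval i'+2 from by omega] at this
        exact this
      have h5 : (q (2*aval i'+1) - 1) * ρ (2*aval i'+1)
          = q (2*aval i'+1) * ρ (2*aval i'+1) - ρ (2*aval i'+1) := Nat.sub_one_mul _ _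
      have h6 : ρ (2*aval i'+1) ≤ q (2*aval i'+1) * ρ (2*aval i'+1) :=
        Nat.le_mul_of_pos_left _ hq1'
      have hile' : i' - tP (aval i') ≤ ρ (2*aval i'+1) := by omega
      have hkey : i + ρ (2*aval i'+2) ≤ i' := by
        rcases hxi with ⟨j2, hj2, ⟨hy1, hy2⟩, hmod2⟩ | ⟨hkne, hxe⟩
        · exfalso
          obtain ⟨hjk2, htpj2, htt2, hnn2, hle2, hdvd2⟩ :=
            hintP i h1 h2 x hxn j2 hj2 hy1 hy2 hmod2
          have hnn2' : nP (j2+1) + ρ (2*j2+2) = n := by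
            have := hnPt (j2+1) (by omega)
            rw [show 2*(j2+1) = 2*j2+2 from by omega] at this
            exact this
          have haj : aval i' + 1 ≤ j2 := by
            by_contra hcon
            push_neg at hcon
            have := hanti (2*j2+2) (2*aval i'+2) (by omega) (by omega) (by omega)
            omega
          have := htPmono (aval i' + 1) j2 haj
          omega
        · obtain ⟨d2, hak2, hxd2, hdz2, hid2, htpl2, hdvdS2⟩ :=
            hsingP i h1 h2 x hxn hkne hxe
          have htpa2 : tP (aval i) < i := (haval i h1 h2).1
          rcases Nat.lt_trichotomy (aval i) (aval i') with hlta | heqa | hgta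
          · have := htPmono (aval i + 1) (aval i') hlta
            omega
          · rw [heqa] at hdvdS2 hid2 htpl2 hak2 hdz2 htpa2
            obtain ⟨m2, hm2⟩ := hdvdS2
            obtain ⟨m', hm'⟩ := hdvdS'
            have hz : 0 < ρ (2*aval i'+2) := hpos _ (by omega) hak'
            have hmm : m2 < m' := by
              apply Nat.lt_of_mul_lt_mul_left (a := ρ (2*aval i'+2))
              omega
            have hmul : ρ (2*aval i'+2) * (m2+1) ≤ ρ (2*aval i'+2) * m' :=
              Nat.mul_le_mul_left _ hmm
            have h7 : ρ (2*aval i'+2) * (m2+1)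
                = ρ (2*aval i'+2) * m2 + ρ (2*aval i'+2) := by ring
            omega
          · exfalso
            have := htPmono (aval i' + 1) (aval i) hgta
            omega
      exact ⟨nP (aval i') + (i' - tP (aval i')) + (q (2*aval i'+1) - 1) * ρ (2*aval i'+1),
        hmkInt i' h1' h2t (aval i') _ (le_refl _) ha1k' (by omega), by omega, by omega⟩
  -- ## final assembly
  intro I hI hne c hc
  have hIne : I.Nonempty := by
    rcases I.eq_empty_or_nonempty with h | h
    · subst h; simp [symmDiffs] at hne
    · exact h
  set B := cyclicBlock n t c with hBdef
  have hmemB : ∀ v, v ∈ B ↔ ((c < v ∧ v ≤ c + t ∧ v ≤ n) ∨ (1 ≤ v ∧ v + n ≤ c + t)) :=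
    fun v => mem_cyclicBlock n t c v hc htn
  have hIr : ∀ i ∈ I, 1 ≤ i ∧ i ≤ t := by
    intro i hi
    exact Finset.mem_Icc.1 (hI hi)
  set V := B.filter (fun x => ∃ i ∈ I, x ∈ g i) with hVdef
  have hVne : V.Nonempty := by
    obtain ⟨i, hi⟩ := hIne
    obtain ⟨h1, h2⟩ := hIr i hi
    obtain ⟨y, hy1, hy2⟩ := hP1 i h1 h2 c hc
    exact ⟨y, Finset.mem_filter.2 ⟨hy2, ⟨i, hi, hy1⟩⟩⟩
  set x0 := V.min' hVne with hx0def
  have hx0V : x0 ∈ V := V.min'_mem hVne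
  have hx0B : x0 ∈ B := (Finset.mem_filter.1 hx0V).1
  obtain ⟨i0, hi0I, hi0x⟩ := (Finset.mem_filter.1 hx0V).2
  have hx0n : x0 ≤ n := by
    rcases (hmemB x0).1 hx0B with h | h
    · exact h.2.2
    · omega
  have hfil : I.filter (fun i => x0 ∈ g i) = {i0} := by
    apply Finset.eq_singleton_iff_unique_mem.2
    refine ⟨Finset.mem_filter.2 ⟨hi0I, hi0x⟩, ?_⟩
    intro i1 hi1f
    obtain ⟨hi1I, hi1x⟩ := Finset.mem_filter.1 hi1f
    by_contra hne10
    -- two indices both containing x0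
    obtain ⟨a0, a1, ha01, ha0I, ha1I, ha0x, ha1x⟩ :
        ∃ a0 a1, a0 < a1 ∧ a0 ∈ I ∧ a1 ∈ I ∧ x0 ∈ g a0 ∧ x0 ∈ g a1 := by
      rcases Nat.lt_or_ge i1 i0 with h | h
      · exact ⟨i1, i0, h, hi1I, hi0I, hi1x, hi0x⟩
      · exact ⟨i0, i1, by omega, hi0I, hi1I, hi0x, hi1x⟩
    obtain ⟨h01, h0t⟩ := hIr a0 ha0I
    obtain ⟨h11, h1t⟩ := hIr a1 ha1I
    obtain ⟨y, hyg, hylb, hylt⟩ := hMAIN a0 a1 h01 ha01 h1t x0 ha0x ha1x hx0n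
    have hyB : y ∉ B := by
      intro hyB
      have : y ∈ V := Finset.mem_filter.2 ⟨hyB, ⟨a1, ha1I, hyg⟩⟩
      have := V.min'_le y this
      omega
    have ha0B : a0 ∈ B := by
      rcases (hmemB x0).1 hx0B with ⟨hh1, hh2, hh3⟩ | ⟨hh1, hh2⟩
      · -- x0 in high part
        have hy1 : 1 ≤ y := by omega
        have hyn : y ≤ n := by omega
        have hyct : y ≤ c + t := by omega
        have hyc : y ≤ c := by
          by_contra hcon
          exact hyB ((hmemB y).2 (Or.inl ⟨by omega, hyct, hyn⟩))
        exact (hmemB a0).2 (Or.inr ⟨h01, by omega⟩)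
      · -- x0 in low (wrapped) part
        exact (hmemB a0).2 (Or.inr ⟨h01, by omega⟩)
    have ha0V : a0 ∈ V := Finset.mem_filter.2 ⟨ha0B, ⟨a0, ha0I, hself a0 h01 h0t⟩⟩
    have := V.min'_le a0 ha0V
    omega
  refine ⟨x0, Finset.mem_inter.2 ⟨?_, hx0B⟩⟩
  rw [mem_symmDiffs, hfil]
  simp
end

section
/- Let n, t, q, r, r' be positive integers with n = qt + r, r < t, r ∤ t, t ≡ r' (mod r), and r' dividing r. Define g_i for i ≤ t − r' as {x ∈ {1,...,n} : x ≡ i (mod t)} ∪ {x : x > qt, x − qt ≡ i (mod r)}, and for i > t − r' as {x ∈ {1,...,n} : x ≡ i (mod t)} ∪ {x : x > qt, x − qt ≡ i (mod r')}. Then the sets g_i ∩ {1,...,n−r} for i ∈ {1,...,t} are pairwise disjoint, and every nonempty symmetric difference Δ_{i∈I} g_i (I ⊆ {1,...,t} nonempty) intersects every cyclic translate of {1,...,t} modulo n. -/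
open Finset
open scoped symmDiff Classical

lemma exists_mod_Ioc (w j d : ℕ) (hd : 0 < d) :
    ∃ y, w < y ∧ y ≤ w + d ∧ y % d = j % d := by
  refine ⟨j % d + d * ((w + d - j % d) / d), ?_, ?_, ?_⟩
  · have h1 := Nat.div_add_mod (w + d - j % d) d
    have h2 := Nat.mod_lt (w + d - j % d) hd
    have h3 := Nat.mod_lt j hd
    omega
  · have h1 := Nat.div_add_mod (w + d - j % d) d
    have h2 := Nat.mod_lt (w + d - j % d) hd
    have h3 := Nat.mod_lt j hd
    omega
  · rw [Nat.add_mul_mod_self_left]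
    exact Nat.mod_mod_of_dvd j dvd_rfl

lemma eq_of_mod_eq' {d a b : ℕ} (hd : 0 < d) (h : a % d = b % d)
    (h1 : a < b + d) (h2 : b < a + d) : a = b := by
  rcases le_total a b with hle | hle
  · rcases Nat.eq_or_lt_of_le hle with h' | h'
    · exact h'
    · have hdvd := (Nat.modEq_iff_dvd' hle).mp h
      have := Nat.le_of_dvd (by omega) hdvd
      omega
  · rcases Nat.eq_or_lt_of_le hle with h' | h'
    · exact h'.symm
    · have hdvd := (Nat.modEq_iff_dvd' hle).mp h.symm
      have := Nat.le_of_dvd (by omega) hdvd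
      omega

lemma mem_symmDiffs_iff (g : ℕ → Finset ℕ) (x : ℕ) (I : Finset ℕ) :
    x ∈ symmDiffs I g ↔ Odd (I.filter (fun i => x ∈ g i)).card := by
  classical
  induction I using Finset.induction_on with
  | empty => simp [symmDiffs]
  | @insert a s ha ih =>
    unfold symmDiffs at ih ⊢
    rw [Finset.fold_insert ha, Finset.mem_symmDiff, Finset.filter_insert]
    by_cases hx : x ∈ g a
    · rw [if_pos hx, Finset.card_insert_of_notMem (fun h => ha (Finset.mem_filter.mp h).1)]
      rw [Nat.odd_iff] at ih ⊢
      simp only [hx, true_and, and_true, not_true, false_and, and_false, or_false, false_or,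
        not_false_iff]
      rw [ih]
      omega
    · rw [if_neg hx]
      simp only [hx, false_and, and_false, false_or, or_false, not_false_iff, and_true]
      exact ih

theorem stmt19 (n q t r r' : ℕ) (hq : 0 < q) (ht : 0 < t) (hr : 0 < r)
    (hr' : 0 < r') (hn : n = q * t + r) (hrlt : r < t) (hndvd : ¬ r ∣ t)
    (hcong : t % r = r' % r) (hr'r : r' ∣ r)
    (g : ℕ → Finset ℕ)
    (hg1 : ∀ i, i ≤ t - r' → g i = (Finset.Icc 1 n).filter
      (fun x => x % t = i % t ∨ (q * t < x ∧ (x - q * t) % r = i % r)))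
    (hg2 : ∀ i, t - r' < i → g i = (Finset.Icc 1 n).filter
      (fun x => x % t = i % t ∨ (q * t < x ∧ (x - q * t) % r' = i % r'))) :
    (∀ i ∈ Finset.Icc 1 t, ∀ j ∈ Finset.Icc 1 t, i ≠ j →
      Disjoint (g i ∩ Finset.Icc 1 (n - r)) (g j ∩ Finset.Icc 1 (n - r))) ∧
    (∀ I ⊆ Finset.Icc 1 t, I ≠ ∅ → symmDiffs I g ≠ ∅ →
      ∀ c < n, (symmDiffs I g ∩ cyclicBlock n t c).Nonempty) := by
  -- basic arithmetic facts
  have hr'lt : r' < r := by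
    by_contra h
    have heq : r' = r := le_antisymm (Nat.le_of_dvd hr hr'r) (not_lt.mp h)
    apply hndvd
    apply Nat.dvd_of_mod_eq_zero
    rw [hcong, heq, Nat.mod_self]
  have htr : t % r = r' := by rw [hcong]; exact Nat.mod_eq_of_lt hr'lt
  have hdm := Nat.div_add_mod t r
  rw [htr] at hdm   -- hdm : r * (t / r) + r' = t
  set m := t / r with hmdef
  have hmr : t = r * m + r' := by omega
  have hm1 : 1 ≤ m := by
    rcases Nat.eq_zero_or_pos m with h | h
    · rw [h] at hmr; omega
    · exact h
  have hmm1 : r * m = r * (m - 1) + r := by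
    have h : m - 1 + 1 = m := by omega
    calc r * m = r * (m - 1 + 1) := by rw [h]
      _ = r * (m - 1) + r := by ring
  have hrm : r ≤ r * m := by omega
  have ht_le_qt : t ≤ q * t := Nat.le_mul_of_pos_left t hq
  -- membership in g for small x
  have hglow : ∀ x i, 1 ≤ x → x ≤ q * t → 1 ≤ i → i ≤ t →
      (x ∈ g i ↔ x % t = i % t) := by
    intro x i hx1 hx2 hi1 hi2
    by_cases h : i ≤ t - r'
    · rw [hg1 i h, Finset.mem_filter, Finset.mem_Icc]
      constructor
      · rintro ⟨-, hc | ⟨hgt, -⟩⟩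
        · exact hc
        · omega
      · intro hc; exact ⟨⟨hx1, by omega⟩, Or.inl hc⟩
    · rw [hg2 i (by omega), Finset.mem_filter, Finset.mem_Icc]
      constructor
      · rintro ⟨-, hc | ⟨hgt, -⟩⟩
        · exact hc
        · omega
      · intro hc; exact ⟨⟨hx1, by omega⟩, Or.inl hc⟩
  -- membership in g for tail points
  have hgtail : ∀ y i, 1 ≤ y → y ≤ r → 1 ≤ i → i ≤ t →
      (q * t + y ∈ g i ↔
        ((i ≤ r * m ∧ y % r = i % r) ∨ (r * m < i ∧ y % r' = i % r'))) := by
    intro y i hy1 hy2 hi1 hi2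
    have hmodt : (q * t + y) % t = y := by
      rw [show q * t + y = t * q + y by ring, Nat.mul_add_mod]
      exact Nat.mod_eq_of_lt (by omega)
    have hsub : q * t + y - q * t = y := by omega
    by_cases h : i ≤ t - r'
    · rw [hg1 i h, Finset.mem_filter, Finset.mem_Icc]
      have hit : i % t = i := Nat.mod_eq_of_lt (by omega)
      constructor
      · rintro ⟨-, hc | ⟨-, hc⟩⟩
        · rw [hmodt, hit] at hc; left; exact ⟨by omega, by rw [hc]⟩
        · rw [hsub] at hc; left; exact ⟨by omega, hc⟩
      · rintro (⟨-, hc⟩ | ⟨hgt, -⟩)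
        · exact ⟨⟨by omega, by omega⟩, Or.inr ⟨by omega, by rwa [hsub]⟩⟩
        · omega
    · rw [hg2 i (by omega), Finset.mem_filter, Finset.mem_Icc]
      constructor
      · rintro ⟨-, hc | ⟨-, hc⟩⟩
        · exfalso
          rw [hmodt] at hc
          rcases Nat.eq_or_lt_of_le hi2 with he | hl
          · rw [he, Nat.mod_self] at hc; omega
          · rw [Nat.mod_eq_of_lt hl] at hc; omega
        · rw [hsub] at hc; right; exact ⟨by omega, hc⟩
      · rintro (⟨hle, -⟩ | ⟨-, hc⟩)
        · omega
        · exact ⟨⟨by omega, by omega⟩, Or.inr ⟨by omega, by rwa [hsub]⟩⟩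
  constructor
  · -- disjointness
    intro i hi j hj hij
    rw [Finset.mem_Icc] at hi hj
    rw [Finset.disjoint_left]
    intro x hx hx'
    rw [Finset.mem_inter, Finset.mem_Icc] at hx hx'
    obtain ⟨hxg, hx1, hx2⟩ := hx
    obtain ⟨hxg', -⟩ := hx'
    have hx2' : x ≤ q * t := by omega
    have e1 := (hglow x i hx1 hx2' hi.1 hi.2).mp hxg
    have e2 := (hglow x j hx1 hx2' hj.1 hj.2).mp hxg'
    exact hij (eq_of_mod_eq' ht (e1.symm.trans e2) (by omega) (by omega))
  · -- hitting every cyclic block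
    intro I hI hIne hDne c hc
    obtain ⟨i₀, hi₀I⟩ := Finset.nonempty_iff_ne_empty.mpr hIne
    have hIt : ∀ b ∈ I, 1 ≤ b ∧ b ≤ t := fun b hb => Finset.mem_Icc.mp (hI hb)
    have hmemD : ∀ x i₁, i₁ ∈ I → x ∈ g i₁ → (∀ b ∈ I, x ∈ g b → b = i₁) →
        x ∈ symmDiffs I g := by
      intro x i₁ h1 h2 h3
      rw [mem_symmDiffs_iff]
      have hsing : I.filter (fun i => x ∈ g i) = {i₁} := by
        apply Finset.eq_singleton_iff_unique_mem.mpr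
        refine ⟨Finset.mem_filter.mpr ⟨h1, h2⟩, fun b hb => ?_⟩
        exact h3 b (Finset.mem_filter.mp hb).1 (Finset.mem_filter.mp hb).2
      rw [hsing]
      simp
    have hblock1 : ∀ x, c < x → x ≤ c + t → x ≤ n → x ∈ cyclicBlock n t c := by
      intro x h1 h2 h3
      simp only [cyclicBlock, Finset.mem_image, Finset.mem_range]
      refine ⟨x - 1 - c, by omega, ?_⟩
      rw [show c + (x - 1 - c) = x - 1 by omega, Nat.mod_eq_of_lt (by omega)]
      omega
    have hblock2 : ∀ x, 1 ≤ x → x + n ≤ c + t → x ∈ cyclicBlock n t c := by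
      intro x h1 h2
      simp only [cyclicBlock, Finset.mem_image, Finset.mem_range]
      refine ⟨x - 1 + (n - c), by omega, ?_⟩
      rw [show c + (x - 1 + (n - c)) = x - 1 + n by omega, Nat.add_mod_right,
        Nat.mod_eq_of_lt (by omega)]
      omega
    by_cases hA : c + t ≤ n
    · -- block does not wrap
      by_cases hAs : ∃ i ∈ I, c + t < q * t + i
      · obtain ⟨i, hiI, hilt⟩ := hAs
        obtain ⟨hi1, hi2⟩ := hIt i hiI
        obtain ⟨x, hx1, hx2, hx3⟩ := exists_mod_Ioc c i t ht
        have hxle : x ≤ q * t := by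
          by_contra hgt
          push_neg at hgt
          have h5 : x % t = x - q * t := by
            conv_lhs => rw [show x = t * q + (x - q * t) by rw [Nat.mul_comm]; omega]
            rw [Nat.mul_add_mod]
            exact Nat.mod_eq_of_lt (by omega)
          rcases Nat.eq_or_lt_of_le hi2 with he | hl
          · rw [he, Nat.mod_self] at hx3; omega
          · rw [Nat.mod_eq_of_lt hl] at hx3; omega
        refine ⟨x, Finset.mem_inter.mpr ⟨?_, hblock1 x hx1 hx2 (by omega)⟩⟩
        apply hmemD x i hiI ((hglow x i (by omega) hxle hi1 hi2).mpr hx3)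
        intro b hbI hbg
        obtain ⟨hb1, hb2⟩ := hIt b hbI
        have hb3 := (hglow x b (by omega) hxle hb1 hb2).mp hbg
        exact eq_of_mod_eq' ht (hb3.symm.trans hx3) (by omega) (by omega)
      · push_neg at hAs
        have hs0 := hAs i₀ hi₀I
        obtain ⟨hi01, hi02⟩ := hIt i₀ hi₀I
        have hi0r : i₀ ≤ r := by omega
        refine ⟨q * t + i₀, Finset.mem_inter.mpr
          ⟨?_, hblock1 _ (by omega) (by omega) (by omega)⟩⟩
        apply hmemD _ i₀ hi₀I
          ((hgtail i₀ i₀ hi01 hi0r hi01 hi02).mpr (Or.inl ⟨by omega, rfl⟩))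
        intro b hbI hbg
        obtain ⟨hb1, hb2⟩ := hIt b hbI
        have hbr : b ≤ r := by have := hAs b hbI; omega
        rcases (hgtail i₀ b hi01 hi0r hb1 hb2).mp hbg with ⟨-, hmod⟩ | ⟨hgt, -⟩
        · exact (eq_of_mod_eq' hr hmod (by omega) (by omega)).symm
        · omega
    · -- block wraps around n
      push_neg at hA
      by_cases hB1 : ∃ i ∈ I, i + n ≤ c + t
      · obtain ⟨i, hiI, hile⟩ := hB1
        obtain ⟨hi1, hi2⟩ := hIt i hiI
        refine ⟨i, Finset.mem_inter.mpr ⟨?_, hblock2 i hi1 hile⟩⟩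
        apply hmemD i i hiI ((hglow i i hi1 (by omega) hi1 hi2).mpr rfl)
        intro b hbI hbg
        obtain ⟨hb1, hb2⟩ := hIt b hbI
        have hb3 := (hglow i b hi1 (by omega) hb1 hb2).mp hbg
        exact eq_of_mod_eq' ht hb3.symm (by omega) (by omega)
      · push_neg at hB1
        by_cases hB2 : n ≤ c + r
        · -- the wrapped top part lies entirely in the tail
          by_cases hI2 : ∃ i ∈ I, r * m < i
          · obtain ⟨i₂, hi2I, hi2gt⟩ := hI2
            obtain ⟨hi21, hi22⟩ := hIt i₂ hi2I
            have hs2 := hB1 i₂ hi2I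
            obtain ⟨w, hw⟩ : r' ∣ r * m := hr'r.mul_right m
            have hi2mod : i₂ % r' = (i₂ - r * m) % r' := by
              conv_lhs => rw [show i₂ = r' * w + (i₂ - r * m) by omega]
              rw [Nat.mul_add_mod]
            by_cases hur' : r' ≤ n - c
            · obtain ⟨y, hy1, hy2, hy3⟩ := exists_mod_Ioc (r - (n - c)) (i₂ - r * m) r' hr'
              have hyr : y ≤ r := by omega
              have hy0 : 1 ≤ y := by omega
              refine ⟨q * t + y, Finset.mem_inter.mpr
                ⟨?_, hblock1 _ (by omega) (by omega) (by omega)⟩⟩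
              apply hmemD _ i₂ hi2I ((hgtail y i₂ hy0 hyr hi21 hi22).mpr
                (Or.inr ⟨hi2gt, by rw [hy3, hi2mod]⟩))
              intro b hbI hbg
              obtain ⟨hb1, hb2⟩ := hIt b hbI
              have hbs := hB1 b hbI
              rcases (hgtail y b hy0 hyr hb1 hb2).mp hbg with ⟨hble, hmod⟩ | ⟨hbgt, hmod⟩
              · exfalso
                have hbmod : b % r = (b - r * (m - 1)) % r := by
                  conv_lhs => rw [show b = r * (m - 1) + (b - r * (m - 1)) by omega]
                  rw [Nat.mul_add_mod]
                have heq := eq_of_mod_eq' hr (hmod.trans hbmod) (by omega) (by omega)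
                omega
              · have hbmod : b % r' = (b - r * m) % r' := by
                  conv_lhs => rw [show b = r' * w + (b - r * m) by omega]
                  rw [Nat.mul_add_mod]
                have h7 : (b - r * m) % r' = (i₂ - r * m) % r' := by
                  rw [← hbmod, ← hmod, hy3]
                have := eq_of_mod_eq' hr' h7 (by omega) (by omega)
                omega
            · -- n - c < r' : every element of I exceeds r * m
              push_neg at hur'
              have hallb : ∀ b ∈ I, r * m < b := by
                intro b hbI
                obtain ⟨hb1, hb2⟩ := hIt b hbI
                have := hB1 b hbI
                omega
              have hj1 : 1 ≤ i₂ - r * m := by omega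
              have hjr' : i₂ - r * m ≤ r' := by omega
              have hymod : (r - r' + (i₂ - r * m)) % r' = (i₂ - r * m) % r' := by
                obtain ⟨v, hv⟩ : r' ∣ r - r' := Nat.dvd_sub hr'r dvd_rfl
                conv_lhs => rw [show r - r' + (i₂ - r * m) = r' * v + (i₂ - r * m) by omega]
                rw [Nat.mul_add_mod]
              have hy0 : 1 ≤ r - r' + (i₂ - r * m) := by omega
              have hyr : r - r' + (i₂ - r * m) ≤ r := by omega
              refine ⟨q * t + (r - r' + (i₂ - r * m)), Finset.mem_inter.mpr
                ⟨?_, hblock1 _ (by omega) (by omega) (by omega)⟩⟩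
              apply hmemD _ i₂ hi2I ((hgtail _ i₂ hy0 hyr hi21 hi22).mpr
                (Or.inr ⟨hi2gt, by rw [hymod, hi2mod]⟩))
              intro b hbI hbg
              obtain ⟨hb1, hb2⟩ := hIt b hbI
              rcases (hgtail _ b hy0 hyr hb1 hb2).mp hbg with ⟨hble, -⟩ | ⟨hbgt, hmod⟩
              · exact absurd hble (by have := hallb b hbI; omega)
              · have hbmod : b % r' = (b - r * m) % r' := by
                  conv_lhs => rw [show b = r' * w + (b - r * m) by omega]
                  rw [Nat.mul_add_mod]
                have h7 : (b - r * m) % r' = (i₂ - r * m) % r' := by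
                  rw [← hbmod, ← hmod, hymod]
                have := eq_of_mod_eq' hr' h7 (by omega) (by omega)
                omega
          · push_neg at hI2
            obtain ⟨hi01, hi02⟩ := hIt i₀ hi₀I
            have hi0le := hI2 i₀ hi₀I
            have hs0 := hB1 i₀ hi₀I
            have he1 : 1 ≤ i₀ - r * (m - 1) := by omega
            have he2 : i₀ - r * (m - 1) ≤ r := by omega
            have hi0mod : i₀ % r = (i₀ - r * (m - 1)) % r := by
              conv_lhs => rw [show i₀ = r * (m - 1) + (i₀ - r * (m - 1)) by omega]
              rw [Nat.mul_add_mod]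
            refine ⟨q * t + (i₀ - r * (m - 1)), Finset.mem_inter.mpr
              ⟨?_, hblock1 _ (by omega) (by omega) (by omega)⟩⟩
            apply hmemD _ i₀ hi₀I ((hgtail _ i₀ he1 he2 hi01 hi02).mpr
              (Or.inl ⟨hi0le, hi0mod.symm⟩))
            intro b hbI hbg
            obtain ⟨hb1, hb2⟩ := hIt b hbI
            rcases (hgtail _ b he1 he2 hb1 hb2).mp hbg with ⟨-, hmod⟩ | ⟨hbgt, -⟩
            · have hbs := hB1 b hbI
              have hble := hI2 b hbI
              have hbmod : b % r = (b - r * (m - 1)) % r := by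
                conv_lhs => rw [show b = r * (m - 1) + (b - r * (m - 1)) by omega]
                rw [Nat.mul_add_mod]
              have := eq_of_mod_eq' hr (hmod.trans hbmod) (by omega) (by omega)
              omega
            · exact absurd hbgt (by have := hI2 b hbI; omega)
        · -- n - c > r : wrapped top part covers the whole tail and more
          push_neg at hB2
          by_cases hB2b : ∃ i ∈ I, t + r < i + (n - c)
          · obtain ⟨i, hiI, higt⟩ := hB2b
            obtain ⟨hi1, hi2⟩ := hIt i hiI
            have hq1t : (q - 1) * t + t = q * t := by
              obtain ⟨k, rfl⟩ : ∃ k, q = k + 1 := ⟨q - 1, by omega⟩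
              simp [Nat.succ_mul]
            have hxmod : ((q - 1) * t + i) % t = i % t := by
              rw [show (q - 1) * t + i = t * (q - 1) + i by ring, Nat.mul_add_mod]
            refine ⟨(q - 1) * t + i, Finset.mem_inter.mpr
              ⟨?_, hblock1 _ (by omega) (by omega) (by omega)⟩⟩
            apply hmemD _ i hiI ((hglow _ i (by omega) (by omega) hi1 hi2).mpr hxmod)
            intro b hbI hbg
            obtain ⟨hb1, hb2⟩ := hIt b hbI
            have hb3 := (hglow _ b (by omega) (by omega) hb1 hb2).mp hbg
            exact eq_of_mod_eq' ht (hb3.symm.trans hxmod) (by omega) (by omega)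
          · push_neg at hB2b
            by_cases hI2 : ∃ i ∈ I, r * m < i
            · obtain ⟨i₂, hi2I, hi2gt⟩ := hI2
              obtain ⟨hi21, hi22⟩ := hIt i₂ hi2I
              have hup := hB2b i₂ hi2I
              have hy1 : 1 ≤ i₂ - r * m := by omega
              have hyr : i₂ - r * m ≤ r := by omega
              obtain ⟨w, hw⟩ : r' ∣ r * m := hr'r.mul_right m
              have hi2mod : i₂ % r' = (i₂ - r * m) % r' := by
                conv_lhs => rw [show i₂ = r' * w + (i₂ - r * m) by omega]
                rw [Nat.mul_add_mod]
              refine ⟨q * t + (i₂ - r * m), Finset.mem_inter.mpr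
                ⟨?_, hblock1 _ (by omega) (by omega) (by omega)⟩⟩
              apply hmemD _ i₂ hi2I ((hgtail _ i₂ hy1 hyr hi21 hi22).mpr
                (Or.inr ⟨hi2gt, hi2mod.symm⟩))
              intro b hbI hbg
              obtain ⟨hb1, hb2⟩ := hIt b hbI
              rcases (hgtail _ b hy1 hyr hb1 hb2).mp hbg with ⟨hble, hmod⟩ | ⟨hbgt, hmod⟩
              · exfalso
                have hbs := hB1 b hbI
                have hbmod : b % r = (b - r * (m - 1)) % r := by
                  conv_lhs => rw [show b = r * (m - 1) + (b - r * (m - 1)) by omega]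
                  rw [Nat.mul_add_mod]
                have heq := eq_of_mod_eq' hr (hmod.trans hbmod) (by omega) (by omega)
                omega
              · have hbmod : b % r' = (b - r * m) % r' := by
                  conv_lhs => rw [show b = r' * w + (b - r * m) by omega]
                  rw [Nat.mul_add_mod]
                have h7 : (b - r * m) % r' = (i₂ - r * m) % r' := by
                  rw [← hbmod]; exact hmod.symm
                have := eq_of_mod_eq' hr' h7 (by omega) (by omega)
                omega
            · push_neg at hI2
              obtain ⟨hi01, hi02⟩ := hIt i₀ hi₀I
              obtain ⟨y, hy1, hy2, hy3⟩ := exists_mod_Ioc 0 i₀ r hr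
              refine ⟨q * t + y, Finset.mem_inter.mpr
                ⟨?_, hblock1 _ (by omega) (by omega) (by omega)⟩⟩
              apply hmemD _ i₀ hi₀I ((hgtail y i₀ (by omega) (by omega) hi01 hi02).mpr
                (Or.inl ⟨hI2 i₀ hi₀I, hy3⟩))
              intro b hbI hbg
              obtain ⟨hb1, hb2⟩ := hIt b hbI
              rcases (hgtail y b (by omega) (by omega) hb1 hb2).mp hbg with
                ⟨-, hmod⟩ | ⟨hbgt, -⟩
              · have h1 := hB1 b hbI
                have h2 := hB2b b hbI
                have h3 := hB1 i₀ hi₀I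
                have h4 := hB2b i₀ hi₀I
                exact eq_of_mod_eq' hr (hmod.symm.trans hy3) (by omega) (by omega)
              · exact absurd hbgt (by have := hI2 b hbI; omega)
end
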